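/- arXiv:1112.2120 — 3 statements merged into one kernel-verified Lean document; each statement's English description precedes it below -/
import Mathlib

section
/- There is a bijection g from the set of column-positive staircase fillings to the set of enriched permutation fillings such that g(T ⊕ T') = g(T) ⊞ g(T') and, writing ρ = g(T): ℓ(T) = ℓ(ρ), n(T) = n(ρ), comp(T) = boxcomp(ρ), min(T) = lmin(ρ), and rmax(T) = rmax(ρ). -/
/-! ## Permutations of `{1,…,n}` encoded as functions `ℕ → ℕ` (zero outside `[1,n]`). -/

/-- `f` represents a permutation of `{1,…,n}` in one-line notation:
`f j` is the value in position `j` (for `1 ≤ j ≤ n`), and `f` is `0` elsewhere. -/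
def IsPermOn (n : ℕ) (f : ℕ → ℕ) : Prop :=
  Set.BijOn f (Set.Icc 1 n) (Set.Icc 1 n) ∧ ∀ i, i ∉ Set.Icc 1 n → f i = 0

/-- Ascent tops: values `f j` with `2 ≤ j ≤ n` and `f (j-1) < f j`. -/
def permAsc (n : ℕ) (f : ℕ → ℕ) : Set ℕ :=
  {v | ∃ j, 2 ≤ j ∧ j ≤ n ∧ f (j - 1) < f j ∧ v = f j}

/-- Short ascents (adjacencies): ascent tops with `f (j-1) + 1 = f j`. -/
def permAdjAsc (n : ℕ) (f : ℕ → ℕ) : Set ℕ :=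
  {v | ∃ j, 2 ≤ j ∧ j ≤ n ∧ f (j - 1) + 1 = f j ∧ v = f j}

/-- Occurrences of the pattern `P`: ascent tops `f j` such that the value
`f j - 1` occurs in a position greater than `j`. -/
def permP (n : ℕ) (f : ℕ → ℕ) : Set ℕ :=
  {v | ∃ j, 2 ≤ j ∧ j ≤ n ∧ f (j - 1) < f j ∧ v = f j ∧
    ∃ k, j < k ∧ k ≤ n ∧ f k = f j - 1}

/-- Occurrences of the pattern `Q`: ascent tops `f j` such that the value
`f j - 1` occurs in a position less than `j - 1`. -/
def permQ (n : ℕ) (f : ℕ → ℕ) : Set ℕ :=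
  {v | ∃ j, 2 ≤ j ∧ j ≤ n ∧ f (j - 1) < f j ∧ v = f j ∧
    ∃ k, 1 ≤ k ∧ k + 1 < j ∧ f k = f j - 1}

/-- Silly ascents: `(Asc(π) ∪ {π 1}) \ {n}`. -/
def permAscSilly (n : ℕ) (f : ℕ → ℕ) : Set ℕ :=
  (permAsc n f ∪ {f 1}) \ {n}

/-- Occurrences of the silly pattern `P`: silly ascents `a` such that the value
`a + 1` occurs to the left of the value `a`. -/
def permPSilly (n : ℕ) (f : ℕ → ℕ) : Set ℕ :=
  {a | a ∈ permAscSilly n f ∧ ∃ j k, 1 ≤ j ∧ j < k ∧ k ≤ n ∧ f j = a + 1 ∧ f k = a}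

/-- Occurrences of the silly pattern `Q`: silly ascents `a` such that the value
`a + 1` occurs to the right of the value `a`. -/
def permQSilly (n : ℕ) (f : ℕ → ℕ) : Set ℕ :=
  {a | a ∈ permAscSilly n f ∧ ∃ j k, 1 ≤ j ∧ j < k ∧ k ≤ n ∧ f j = a ∧ f k = a + 1}

/-- Right minima: values having no smaller value to their right. -/
def permRmin (n : ℕ) (f : ℕ → ℕ) : Set ℕ :=
  {v | ∃ j, 1 ≤ j ∧ j ≤ n ∧ v = f j ∧ ∀ k, j < k → k ≤ n → f j < f k}

/-- Right maxima: values having no larger value to their right. -/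
def permRmax (n : ℕ) (f : ℕ → ℕ) : Set ℕ :=
  {v | ∃ j, 1 ≤ j ∧ j ≤ n ∧ v = f j ∧ ∀ k, j < k → k ≤ n → f k < f j}

/-- The number of components of the finest decomposition of a permutation into
direct sums: the number of `k ∈ [1,n]` such that `f` maps `{1,…,k}` into itself. -/
noncomputable def permComp (n : ℕ) (f : ℕ → ℕ) : ℕ :=
  Set.ncard {k | 1 ≤ k ∧ k ≤ n ∧ ∀ i, 1 ≤ i → i ≤ k → f i ≤ k}

/-- The number of descents. -/
noncomputable def permDes (n : ℕ) (f : ℕ → ℕ) : ℕ :=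
  Set.ncard {j | 2 ≤ j ∧ j ≤ n ∧ f j < f (j - 1)}

/-- Ascent bottoms: values `f j` with `1 ≤ j < n` and `f j < f (j+1)`. -/
def permAscBottom (n : ℕ) (f : ℕ → ℕ) : Set ℕ :=
  {v | ∃ j, 1 ≤ j ∧ j + 1 ≤ n ∧ f j < f (j + 1) ∧ v = f j}

/-- Long ascent bottoms: values `f j` with `1 ≤ j < n` and `f j < f (j+1) - 1`. -/
def permAscBottomProper (n : ℕ) (f : ℕ → ℕ) : Set ℕ :=
  {v | ∃ j, 1 ≤ j ∧ j + 1 ≤ n ∧ f j + 1 < f (j + 1) ∧ v = f j}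

/-! ## Matchings on `{1,…,2n}`.

The arcs are indexed `1,…,n` in increasing order of their closers; `opener i`
and `closer i` are the endpoints of the `i`-th arc (and `0` outside `[1,n]`). -/

structure Matching (n : ℕ) where
  opener : ℕ → ℕ
  closer : ℕ → ℕ
  opener_lt_closer : ∀ i, 1 ≤ i → i ≤ n → opener i < closer i
  closer_mono : ∀ i j, 1 ≤ i → i < j → j ≤ n → closer i < closer j
  opener_mem : ∀ i, 1 ≤ i → i ≤ n → opener i ∈ Set.Icc 1 (2 * n)
  closer_mem : ∀ i, 1 ≤ i → i ≤ n → closer i ∈ Set.Icc 1 (2 * n)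
  opener_inj : ∀ i j, 1 ≤ i → i ≤ n → 1 ≤ j → j ≤ n → opener i = opener j → i = j
  opener_ne_closer : ∀ i j, 1 ≤ i → i ≤ n → 1 ≤ j → j ≤ n → opener i ≠ closer j
  cover : ∀ m ∈ Set.Icc 1 (2 * n), ∃ i, 1 ≤ i ∧ i ≤ n ∧ (opener i = m ∨ closer i = m)
  opener_eq_zero : ∀ i, i ∉ Set.Icc 1 n → opener i = 0
  closer_eq_zero : ∀ i, i ∉ Set.Icc 1 n → closer i = 0

namespace Matching

variable {n : ℕ}

/-- No left nesting: no pair of arcs `A, B` with `opener A = opener B + 1`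
and `closer A < closer B`. -/
def NoLeftNesting (M : Matching n) : Prop :=
  ∀ i j, 1 ≤ i → i ≤ n → 1 ≤ j → j ≤ n →
    ¬(M.opener i = M.opener j + 1 ∧ M.closer i < M.closer j)

/-- Right nestings, indexed by the arc with the larger closer. -/
def RneSet (M : Matching n) : Set ℕ :=
  {i | 2 ≤ i ∧ i ≤ n ∧ M.opener i < M.opener (i - 1) ∧ M.closer i = M.closer (i - 1) + 1}

/-- Right crossings, indexed by the arc with the larger closer. -/
def RcrSet (M : Matching n) : Set ℕ :=
  {i | 2 ≤ i ∧ i ≤ n ∧ M.opener (i - 1) < M.opener i ∧ M.opener i < M.closer (i - 1) ∧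
    M.closer i = M.closer (i - 1) + 1}

/-- Double crossings (both left and right crossings), indexed by the right arc. -/
def LRcrSet (M : Matching n) : Set ℕ :=
  {i | i ∈ M.RcrSet ∧ M.opener i = M.opener (i - 1) + 1}

/-- Right single crossings. -/
def RcrpSet (M : Matching n) : Set ℕ := M.RcrSet \ M.LRcrSet

/-- Right adjacencies, indexed by the arc with the larger closer. -/
def RadjSet (M : Matching n) : Set ℕ :=
  {i | 2 ≤ i ∧ i ≤ n ∧ M.closer i = M.closer (i - 1) + 1}

/-- Left crossings, indexed by the arc with the smaller opener. -/
def LcrSet (M : Matching n) : Set ℕ :=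
  {i | 1 ≤ i ∧ i ≤ n ∧ ∃ j, 1 ≤ j ∧ j ≤ n ∧ M.opener j = M.opener i + 1 ∧
    M.opener j < M.closer i ∧ M.closer i < M.closer j}

/-- `Min(M)`: arcs whose opener lies to the left of the first closer. -/
def MinSet (M : Matching n) : Set ℕ :=
  {i | 1 ≤ i ∧ i ≤ n ∧ M.opener i < M.closer 1}

/-- The number of components of the finest decomposition of `M` into direct sums:
the number of `k ∈ [1,n]` such that `{1,…,2k}` is a union of arcs. -/
noncomputable def comp (M : Matching n) : ℕ :=
  Set.ncard {k | 1 ≤ k ∧ k ≤ n ∧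
    ∀ i, 1 ≤ i → i ≤ n → (M.closer i ≤ 2 * k ∨ 2 * k < M.opener i)}

/-- `S` is the direct sum of `M` (size `n₁`) and `M'` (size `n₂`): the diagrams
side by side, the elements of `M'` shifted by `2 n₁`. -/
def IsDsum {n₁ n₂ m : ℕ} (M : Matching n₁) (M' : Matching n₂) (S : Matching m) : Prop :=
  m = n₁ + n₂ ∧
  (∀ i, 1 ≤ i → i ≤ n₁ → S.opener i = M.opener i ∧ S.closer i = M.closer i) ∧
  (∀ i, 1 ≤ i → i ≤ n₂ → S.opener (n₁ + i) = M'.opener i + 2 * n₁ ∧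
    S.closer (n₁ + i) = M'.closer i + 2 * n₁)

end Matching

/-! ## 0-1-fillings of partition shapes.

The shape has `len ≥ 1` columns; column `i` (for `1 ≤ i ≤ len`) has height
`shape i ≥ 1`, weakly increasing from left to right (and `shape i = 0` outside
`[1, len]`).  The dots are the cells holding a `1`. -/

structure Filling where
  len : ℕ
  shape : ℕ → ℕ
  dots : Set (ℕ × ℕ)
  len_pos : 1 ≤ len
  shape_pos : ∀ i, 1 ≤ i → i ≤ len → 1 ≤ shape i
  shape_mono : ∀ i j, 1 ≤ i → i ≤ j → j ≤ len → shape i ≤ shape j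
  shape_eq_zero : ∀ i, i ∉ Set.Icc 1 len → shape i = 0
  dots_mem : ∀ p ∈ dots, 1 ≤ p.1 ∧ p.1 ≤ len ∧ 1 ≤ p.2 ∧ p.2 ≤ shape p.1

namespace Filling

/-- The number of dots of a filling. -/
noncomputable def nDots (T : Filling) : ℕ := Set.ncard T.dots

/-- Every column contains exactly one dot. -/
def ColumnStrict (T : Filling) : Prop :=
  ∀ i, 1 ≤ i → i ≤ T.len → ∃! j, (i, j) ∈ T.dots

/-- Every column contains at least one dot. -/
def ColumnPositive (T : Filling) : Prop :=
  ∀ i, 1 ≤ i → i ≤ T.len → ∃ j, (i, j) ∈ T.dots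

/-- The length of row `j`: the number of columns of height at least `j`. -/
noncomputable def rowLen (T : Filling) (j : ℕ) : ℕ :=
  Set.ncard {i | 1 ≤ i ∧ i ≤ T.len ∧ j ≤ T.shape i}

/-- A shape is flat if its nonempty rows have pairwise distinct lengths. -/
def Flat (T : Filling) : Prop :=
  ∀ j j', 1 ≤ j → 1 ≤ j' → j ≠ j' → 1 ≤ T.rowLen j → 1 ≤ T.rowLen j' →
    T.rowLen j ≠ T.rowLen j'

/-- A staircase shape: `shape = (1, 2, …, len)`. -/
def Staircase (T : Filling) : Prop :=
  ∀ i, 1 ≤ i → i ≤ T.len → T.shape i = i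

/-- The lazy set `X(T)`: columns having the same height as their left neighbour. -/
def lazySet (T : Filling) : Set ℕ :=
  {i | 2 ≤ i ∧ i ≤ T.len ∧ T.shape (i - 1) = T.shape i}

/-- Descents of a column-strict filling: columns whose dot is strictly lower
than the dot of the previous column. -/
def DesSet (T : Filling) : Set ℕ :=
  {i | 2 ≤ i ∧ i ≤ T.len ∧ ∃ j j', (i - 1, j) ∈ T.dots ∧ (i, j') ∈ T.dots ∧ j' < j}

/-- Ascents of a column-strict filling. -/
def AscSet (T : Filling) : Set ℕ :=
  {i | 2 ≤ i ∧ i ≤ T.len ∧ ∃ j j', (i - 1, j) ∈ T.dots ∧ (i, j') ∈ T.dots ∧ j < j'}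

/-- Repetitions of a column-strict filling. -/
def RepSet (T : Filling) : Set ℕ :=
  {i | 2 ≤ i ∧ i ≤ T.len ∧ ∃ j, (i - 1, j) ∈ T.dots ∧ (i, j) ∈ T.dots}

/-- Columns with a dot in their topmost cell. -/
def MaxSet (T : Filling) : Set ℕ :=
  {i | 1 ≤ i ∧ i ≤ T.len ∧ (i, T.shape i) ∈ T.dots}

/-- Columns with a dot on the bottom row. -/
def MinSet (T : Filling) : Set ℕ :=
  {i | 1 ≤ i ∧ i ≤ T.len ∧ (i, 1) ∈ T.dots}

/-- For a column-strict filling: columns whose dot is strictly closer to the top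
of its column than is any dot strictly to the right. -/
def RmaxColSet (T : Filling) : Set ℕ :=
  {i | ∃ j, (i, j) ∈ T.dots ∧
    ∀ i' j', (i', j') ∈ T.dots → i < i' → T.shape i - j < T.shape i' - j'}

/-- `rmax(T)`: the number of dots strictly closer to the top of their column
than is any dot strictly to the right. -/
noncomputable def rmaxDots (T : Filling) : ℕ :=
  Set.ncard {p | p ∈ T.dots ∧
    ∀ q ∈ T.dots, p.1 < q.1 → T.shape p.1 - p.2 < T.shape q.1 - q.2}

/-- `lmin(T)`: the number of dots strictly to the left of any dot strictly below. -/
noncomputable def lminDots (T : Filling) : ℕ :=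
  Set.ncard {p | p ∈ T.dots ∧ ∀ q ∈ T.dots, q.2 < p.2 → p.1 < q.1}

/-- The number of components of the finest decomposition of `T` into direct sums:
the number of columns `k` after which the filling can be cut. -/
noncomputable def comp (T : Filling) : ℕ :=
  Set.ncard {k | 1 ≤ k ∧ k ≤ T.len ∧ (k = T.len ∨ T.shape k < T.shape (k + 1)) ∧
    ∀ p ∈ T.dots, k < p.1 → T.shape k < p.2}

/-- `S = T ⊕ T'`: `T'` is placed strictly to the north-east of `T`, the
rectangle below `T'` being filled with empty cells. -/
def IsDsum (T T' S : Filling) : Prop :=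
  S.len = T.len + T'.len ∧
  (∀ i, 1 ≤ i → i ≤ T.len → S.shape i = T.shape i) ∧
  (∀ i, 1 ≤ i → i ≤ T'.len → S.shape (T.len + i) = T.shape T.len + T'.shape i) ∧
  S.dots = T.dots ∪ (fun p : ℕ × ℕ => (p.1 + T.len, p.2 + T.shape T.len)) '' T'.dots

/-- A square shape. -/
def Square (T : Filling) : Prop :=
  ∀ i, 1 ≤ i → i ≤ T.len → T.shape i = T.len

/-- Enriched permutation filling: a positive filling of a square shape in which
a dot is the leftmost dot of its row iff it is the topmost dot of its column. -/
def Enriched (T : Filling) : Prop :=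
  T.Square ∧
  (∀ i, 1 ≤ i → i ≤ T.len → ∃ j, (i, j) ∈ T.dots) ∧
  (∀ j, 1 ≤ j → j ≤ T.len → ∃ i, (i, j) ∈ T.dots) ∧
  (∀ p ∈ T.dots,
    ((∀ q ∈ T.dots, q.2 = p.2 → p.1 ≤ q.1) ↔ (∀ q ∈ T.dots, q.1 = p.1 → q.2 ≤ p.2)))

/-- `S = R ⊞ R'`: boxed sum of enriched permutation fillings. -/
def IsBoxSum (R R' S : Filling) : Prop :=
  S.len = R.len + R'.len ∧
  (∀ i, 1 ≤ i → i ≤ S.len → S.shape i = S.len) ∧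
  S.dots = R.dots ∪ (fun p : ℕ × ℕ => (p.1 + R.len, p.2 + R.len)) '' R'.dots

/-- The number of components of the finest decomposition into boxed sums. -/
noncomputable def boxcomp (T : Filling) : ℕ :=
  Set.ncard {k | 1 ≤ k ∧ k ≤ T.len ∧
    ∀ p ∈ T.dots, (p.1 ≤ k ∧ p.2 ≤ k) ∨ (k < p.1 ∧ k < p.2)}

end Filling

/-! ## Barred permutations, hatted permutations and marked matchings. -/

/-- A barred permutation: a permutation of `{1,…,n}` together with a set of
barred ascent tops. -/
structure BarredPerm where
  n : ℕ
  toFun : ℕ → ℕ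
  X : Set ℕ
  n_pos : 1 ≤ n
  isPerm : IsPermOn n toFun
  X_subset : X ⊆ permAsc n toFun

/-- Direct sum of barred permutations. -/
def BarredPerm.IsDsum (B B' C : BarredPerm) : Prop :=
  C.n = B.n + B'.n ∧
  (∀ i, C.toFun i = if i ≤ B.n then B.toFun i
    else if i ≤ B.n + B'.n then B'.toFun (i - B.n) + B.n else 0) ∧
  C.X = B.X ∪ (fun a => a + B.n) '' B'.X

/-- A hatted permutation: a permutation of `{1,…,n}` together with a set of
hatted silly ascents. -/
structure HattedPerm where
  n : ℕ
  toFun : ℕ → ℕ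
  X : Set ℕ
  n_pos : 1 ≤ n
  isPerm : IsPermOn n toFun
  X_subset : X ⊆ permAscSilly n toFun

/-- Direct sum of hatted permutations. -/
def HattedPerm.IsDsum (B B' C : HattedPerm) : Prop :=
  C.n = B.n + B'.n ∧
  (∀ i, C.toFun i = if i ≤ B.n then B.toFun i
    else if i ≤ B.n + B'.n then B'.toFun (i - B.n) + B.n else 0) ∧
  C.X = B.X ∪ (fun a => a + B.n) '' B'.X

/-- A marked matching: a matching without left nestings together with a set of
marked right adjacencies. -/
structure MarkedMatching where
  n : ℕ
  n_pos : 1 ≤ n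
  M : Matching n
  noLeftNesting : M.NoLeftNesting
  X : Set ℕ
  X_subset : X ⊆ M.RadjSet

/-- Direct sum of marked matchings. -/
def MarkedMatching.IsDsum (A B C : MarkedMatching) : Prop :=
  Matching.IsDsum A.M B.M C.M ∧ C.X = A.X ∪ (fun a => a + A.n) '' B.X


/-! ### Auxiliary development -/

namespace StairEnr

def shiftRow (m j : ℕ) : ℕ := if j < m then j else j + 1

def shiftD (m : ℕ) (D : Set (ℕ × ℕ)) : Set (ℕ × ℕ) :=
  (fun p : ℕ × ℕ => (p.1, shiftRow m p.2)) '' D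

def newcol (ℓ : ℕ) (S : Set ℕ) : Set (ℕ × ℕ) := (fun j => (ℓ, j)) '' S

def insD (ℓ m : ℕ) (D : Set (ℕ × ℕ)) (S : Set ℕ) : Set (ℕ × ℕ) :=
  shiftD m D ∪ newcol ℓ S

noncomputable def gD : ℕ → (ℕ → Set ℕ) → Set (ℕ × ℕ)
  | 0, _ => ∅
  | (ℓ+1), S => insD (ℓ+1) (sSup (S (ℓ+1))) (gD ℓ S) (S (ℓ+1))

def GoodData (ℓ : ℕ) (S : ℕ → Set ℕ) : Prop :=
  ∀ i, 1 ≤ i → i ≤ ℓ → (S i).Nonempty ∧ ∀ j ∈ S i, 1 ≤ j ∧ j ≤ i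

def stD (ℓ : ℕ) (S : ℕ → Set ℕ) : Set (ℕ × ℕ) :=
  {p | 1 ≤ p.1 ∧ p.1 ≤ ℓ ∧ p.2 ∈ S p.1}

lemma shiftRow_cases (m j : ℕ) :
    (j < m ∧ shiftRow m j = j) ∨ (m ≤ j ∧ shiftRow m j = j + 1) := by
  unfold shiftRow; split <;> omega

lemma shiftRow_inj {m j j' : ℕ} (h : shiftRow m j = shiftRow m j') : j = j' := by
  rcases shiftRow_cases m j with ⟨h1, h2⟩ | ⟨h1, h2⟩ <;>
    rcases shiftRow_cases m j' with ⟨h1', h2'⟩ | ⟨h1', h2'⟩ <;> omega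

lemma shiftRow_lt_iff {m j j' : ℕ} : shiftRow m j < shiftRow m j' ↔ j < j' := by
  rcases shiftRow_cases m j with ⟨h1, h2⟩ | ⟨h1, h2⟩ <;>
    rcases shiftRow_cases m j' with ⟨h1', h2'⟩ | ⟨h1', h2'⟩ <;> omega

lemma shiftRow_le_iff {m j j' : ℕ} : shiftRow m j ≤ shiftRow m j' ↔ j ≤ j' := by
  rcases shiftRow_cases m j with ⟨h1, h2⟩ | ⟨h1, h2⟩ <;>
    rcases shiftRow_cases m j' with ⟨h1', h2'⟩ | ⟨h1', h2'⟩ <;> omega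

lemma shiftFun_inj (m : ℕ) : Function.Injective (fun p : ℕ × ℕ => (p.1, shiftRow m p.2)) := by
  rintro ⟨a, b⟩ ⟨c, d⟩ h
  simp only [Prod.mk.injEq] at h
  exact Prod.ext h.1 (shiftRow_inj h.2)

lemma mem_newcol {ℓ : ℕ} {S : Set ℕ} {p : ℕ × ℕ} :
    p ∈ newcol ℓ S ↔ p.1 = ℓ ∧ p.2 ∈ S := by
  constructor
  · rintro ⟨j, hj, rfl⟩; exact ⟨rfl, hj⟩
  · rintro ⟨h1, h2⟩; exact ⟨p.2, h2, by rw [← h1]⟩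

lemma mem_shiftD {m : ℕ} {D : Set (ℕ × ℕ)} {p : ℕ × ℕ} :
    p ∈ shiftD m D ↔ ∃ q ∈ D, p.1 = q.1 ∧ p.2 = shiftRow m q.2 := by
  constructor
  · rintro ⟨q, hq, rfl⟩; exact ⟨q, hq, rfl, rfl⟩
  · rintro ⟨q, hq, h1, h2⟩
    refine ⟨q, hq, ?_⟩
    show (q.1, shiftRow m q.2) = p
    rw [← h1, ← h2]

lemma sSup_facts {S : Set ℕ} (hne : S.Nonempty) {b : ℕ} (hb : ∀ j ∈ S, j ≤ b) :
    sSup S ∈ S ∧ ∀ j ∈ S, j ≤ sSup S :=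
  ⟨Nat.sSup_mem hne ⟨b, fun x hx => hb x hx⟩,
   fun j hj => le_csSup ⟨b, fun x hx => hb x hx⟩ hj⟩

lemma GoodData.mono {ℓ : ℕ} {S : ℕ → Set ℕ} (h : GoodData (ℓ + 1) S) : GoodData ℓ S :=
  fun i h1 h2 => h i h1 (le_trans h2 (Nat.le_succ ℓ))

lemma GoodData.m_facts {ℓ : ℕ} {S : ℕ → Set ℕ} (h : GoodData (ℓ + 1) S) :
    sSup (S (ℓ + 1)) ∈ S (ℓ + 1) ∧ 1 ≤ sSup (S (ℓ + 1)) ∧ sSup (S (ℓ + 1)) ≤ ℓ + 1 ∧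
      ∀ j ∈ S (ℓ + 1), j ≤ sSup (S (ℓ + 1)) := by
  obtain ⟨hne, hbd⟩ := h (ℓ + 1) (by omega) le_rfl
  obtain ⟨hmem, hle⟩ := sSup_facts hne (fun j hj => (hbd j hj).2)
  exact ⟨hmem, (hbd _ hmem).1, (hbd _ hmem).2, hle⟩

lemma gD_subset {ℓ : ℕ} {S : ℕ → Set ℕ} (hS : GoodData ℓ S) :
    ∀ p ∈ gD ℓ S, 1 ≤ p.1 ∧ p.1 ≤ ℓ ∧ 1 ≤ p.2 ∧ p.2 ≤ ℓ := by
  induction ℓ with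
  | zero => intro p hp; simp [gD] at hp
  | succ ℓ ih =>
    intro p hp
    rcases hp with hp | hp
    · rcases mem_shiftD.1 hp with ⟨q, hq, h1, h2⟩
      obtain ⟨b1, b2, b3, b4⟩ := ih hS.mono q hq
      rcases shiftRow_cases (sSup (S (ℓ + 1))) q.2 with ⟨_, e⟩ | ⟨_, e⟩ <;> omega
    · rcases mem_newcol.1 hp with ⟨h1, h2⟩
      obtain ⟨_, hbd⟩ := hS (ℓ + 1) (by omega) le_rfl
      obtain ⟨c1, c2⟩ := hbd _ h2
      omega

lemma gD_congr {ℓ : ℕ} {S S' : ℕ → Set ℕ} (h : ∀ i, 1 ≤ i → i ≤ ℓ → S i = S' i) :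
    gD ℓ S = gD ℓ S' := by
  induction ℓ with
  | zero => rfl
  | succ ℓ ih =>
    have h1 : S (ℓ + 1) = S' (ℓ + 1) := h (ℓ + 1) (by omega) le_rfl
    have h2 : gD ℓ S = gD ℓ S' := ih (fun i hi1 hi2 => h i hi1 (by omega))
    show insD _ _ _ _ = insD _ _ _ _
    rw [h1, h2]

lemma gD_topcol {ℓ : ℕ} {S : ℕ → Set ℕ} (hS : GoodData (ℓ + 1) S) (j : ℕ) :
    (ℓ + 1, j) ∈ gD (ℓ + 1) S ↔ j ∈ S (ℓ + 1) := by
  constructor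
  · intro hp
    rcases hp with hp | hp
    · rcases mem_shiftD.1 hp with ⟨q, hq, h1, h2⟩
      have := (gD_subset hS.mono q hq).2.1
      simp at h1; omega
    · exact (mem_newcol.1 hp).2
  · intro hj
    exact Or.inr (mem_newcol.2 ⟨rfl, hj⟩)

lemma gD_rows {ℓ : ℕ} {S : ℕ → Set ℕ} (hS : GoodData ℓ S) :
    ∀ j, 1 ≤ j → j ≤ ℓ → ∃ i, (i, j) ∈ gD ℓ S := by
  induction ℓ with
  | zero => intro j h1 h2; omega
  | succ ℓ ih =>
    intro j h1 h2
    obtain ⟨hmem, hm1, hm2, hle⟩ := hS.m_facts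
    set m := sSup (S (ℓ + 1)) with hm
    by_cases hjm : j = m
    · exact ⟨ℓ + 1, Or.inr (mem_newcol.2 ⟨rfl, by rw [hjm]; exact hmem⟩)⟩
    · set j' := if j < m then j else j - 1 with hj'
      have hb : 1 ≤ j' ∧ j' ≤ ℓ := by rw [hj']; split <;> omega
      have hsh : shiftRow m j' = j := by
        have hj'' : j' = if j < m then j else j - 1 := hj'
        rcases shiftRow_cases m j' with ⟨e1, e2⟩ | ⟨e1, e2⟩ <;> split at hj'' <;> omega
      obtain ⟨i, hi⟩ := ih hS.mono j' hb.1 hb.2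
      exact ⟨i, Or.inl (mem_shiftD.2 ⟨(i, j'), hi, rfl, hsh.symm⟩)⟩

lemma gD_cols {ℓ : ℕ} {S : ℕ → Set ℕ} (hS : GoodData ℓ S) :
    ∀ i, 1 ≤ i → i ≤ ℓ → ∃ j, (i, j) ∈ gD ℓ S := by
  induction ℓ with
  | zero => intro i h1 h2; omega
  | succ ℓ ih =>
    intro i h1 h2
    obtain ⟨hmem, hm1, hm2, hle⟩ := hS.m_facts
    by_cases hi : i = ℓ + 1
    · exact ⟨sSup (S (ℓ + 1)), Or.inr (mem_newcol.2 ⟨hi, hmem⟩)⟩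
    · obtain ⟨j, hj⟩ := ih hS.mono i h1 (by omega)
      exact ⟨shiftRow (sSup (S (ℓ + 1))) j, Or.inl (mem_shiftD.2 ⟨(i, j), hj, rfl, rfl⟩)⟩

lemma gD_finite {ℓ : ℕ} {S : ℕ → Set ℕ} (hS : GoodData ℓ S) : (gD ℓ S).Finite := by
  apply Set.Finite.subset ((Set.finite_Icc 1 ℓ).prod (Set.finite_Icc 1 ℓ))
  intro p hp
  obtain ⟨b1, b2, b3, b4⟩ := gD_subset hS p hp
  exact ⟨Set.mem_Icc.2 ⟨b1, b2⟩, Set.mem_Icc.2 ⟨b3, b4⟩⟩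

lemma stD_subset {ℓ : ℕ} {S : ℕ → Set ℕ} (hS : GoodData ℓ S) :
    ∀ p ∈ stD ℓ S, 1 ≤ p.1 ∧ p.1 ≤ ℓ ∧ 1 ≤ p.2 ∧ p.2 ≤ p.1 := by
  rintro p ⟨h1, h2, h3⟩
  obtain ⟨-, hbd⟩ := hS p.1 h1 h2
  obtain ⟨c1, c2⟩ := hbd _ h3
  exact ⟨h1, h2, c1, c2⟩

lemma stD_finite {ℓ : ℕ} {S : ℕ → Set ℕ} (hS : GoodData ℓ S) : (stD ℓ S).Finite := by
  apply Set.Finite.subset ((Set.finite_Icc 1 ℓ).prod (Set.finite_Icc 1 ℓ))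
  intro p hp
  obtain ⟨b1, b2, b3, b4⟩ := stD_subset hS p hp
  exact ⟨Set.mem_Icc.2 ⟨b1, b2⟩, Set.mem_Icc.2 ⟨b3, b4.trans b2⟩⟩

def unshiftRow (m j : ℕ) : ℕ := if j < m then j else j - 1

lemma unshiftRow_cases (m j : ℕ) :
    (j < m ∧ unshiftRow m j = j) ∨ (m ≤ j ∧ unshiftRow m j = j - 1) := by
  unfold unshiftRow; split <;> omega

lemma unshift_shiftRow (m j : ℕ) : unshiftRow m (shiftRow m j) = j := by
  rcases shiftRow_cases m j with ⟨h1, h2⟩ | ⟨h1, h2⟩ <;>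
    rcases unshiftRow_cases m (shiftRow m j) with ⟨g1, g2⟩ | ⟨g1, g2⟩ <;> omega

lemma shift_unshiftRow {m j : ℕ} (h : j ≠ m) (h1 : 1 ≤ j) :
    shiftRow m (unshiftRow m j) = j := by
  rcases unshiftRow_cases m j with ⟨g1, g2⟩ | ⟨g1, g2⟩ <;>
    rcases shiftRow_cases m (unshiftRow m j) with ⟨f1, f2⟩ | ⟨f1, f2⟩ <;> omega

lemma unshift_le_iff {m a b : ℕ} (ha : a ≠ m) (hb : b ≠ m) :
    unshiftRow m a ≤ unshiftRow m b ↔ a ≤ b := by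
  rcases unshiftRow_cases m a with ⟨g1, g2⟩ | ⟨g1, g2⟩ <;>
    rcases unshiftRow_cases m b with ⟨f1, f2⟩ | ⟨f1, f2⟩ <;> omega

lemma unshift_eq_iff {m a b : ℕ} (ha : a ≠ m) (hb : b ≠ m) :
    unshiftRow m a = unshiftRow m b ↔ a = b := by
  rcases unshiftRow_cases m a with ⟨g1, g2⟩ | ⟨g1, g2⟩ <;>
    rcases unshiftRow_cases m b with ⟨f1, f2⟩ | ⟨f1, f2⟩ <;> omega

def EnrD (ℓ : ℕ) (D : Set (ℕ × ℕ)) : Prop :=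
  (∀ p ∈ D, 1 ≤ p.1 ∧ p.1 ≤ ℓ ∧ 1 ≤ p.2 ∧ p.2 ≤ ℓ) ∧
  (∀ i, 1 ≤ i → i ≤ ℓ → ∃ j, (i, j) ∈ D) ∧
  (∀ j, 1 ≤ j → j ≤ ℓ → ∃ i, (i, j) ∈ D) ∧
  (∀ p ∈ D, (∀ q ∈ D, q.2 = p.2 → p.1 ≤ q.1) ↔ (∀ q ∈ D, q.1 = p.1 → q.2 ≤ p.2))

lemma gD_iff {ℓ : ℕ} {S : ℕ → Set ℕ} (hS : GoodData ℓ S) :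
    ∀ p ∈ gD ℓ S, ((∀ q ∈ gD ℓ S, q.2 = p.2 → p.1 ≤ q.1) ↔
      (∀ q ∈ gD ℓ S, q.1 = p.1 → q.2 ≤ p.2)) := by
  induction ℓ with
  | zero => intro p hp; simp [gD] at hp
  | succ ℓ ih =>
    obtain ⟨hmmem, hm1, hm2, hmle⟩ := hS.m_facts
    intro p hp
    have hrow : ∀ j, 1 ≤ j → j ≤ ℓ + 1 → j ≠ sSup (S (ℓ + 1)) →
        ∃ q ∈ gD (ℓ+1) S, q.1 ≤ ℓ ∧ q.2 = j := by
      intro j h1 h2 hjm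
      set j' := unshiftRow (sSup (S (ℓ + 1))) j with hj'
      have hj'' : (j < sSup (S (ℓ + 1)) ∧ j' = j) ∨
          (sSup (S (ℓ + 1)) ≤ j ∧ j' = j - 1) := unshiftRow_cases _ j
      have hb : 1 ≤ j' ∧ j' ≤ ℓ := by omega
      have hsh : shiftRow (sSup (S (ℓ + 1))) j' = j := by
        rw [hj']; exact shift_unshiftRow hjm h1
      obtain ⟨i, hi⟩ := gD_rows hS.mono j' hb.1 hb.2
      refine ⟨(i, j), Or.inl (mem_shiftD.2 ⟨(i, j'), hi, rfl, hsh.symm⟩), ?_, rfl⟩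
      exact (gD_subset hS.mono _ hi).2.1
    rcases hp with hp | hp
    · -- shifted dot
      obtain ⟨q0, hq0, e1, e2⟩ := mem_shiftD.1 hp
      have hb0 := gD_subset hS.mono q0 hq0
      have hLiff : (∀ q ∈ gD (ℓ+1) S, q.2 = p.2 → p.1 ≤ q.1) ↔
          (∀ q ∈ gD ℓ S, q.2 = q0.2 → q0.1 ≤ q.1) := by
        constructor
        · intro h q hq hq2
          have h6 : p.1 ≤ q.1 := h (q.1, shiftRow (sSup (S (ℓ + 1))) q.2)
            (Or.inl (mem_shiftD.2 ⟨q, hq, rfl, rfl⟩))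
            (by show shiftRow (sSup (S (ℓ + 1))) q.2 = p.2; rw [e2, hq2])
          omega
        · intro h q hq hq2
          rcases hq with hq | hq
          · obtain ⟨r, hr, f1, f2⟩ := mem_shiftD.1 hq
            have h3 : r.2 = q0.2 := shiftRow_inj (by rw [← f2, hq2, e2])
            have h4 := h r hr h3
            omega
          · obtain ⟨f1, f2⟩ := mem_newcol.1 hq
            omega
      have hRiff : (∀ q ∈ gD (ℓ+1) S, q.1 = p.1 → q.2 ≤ p.2) ↔
          (∀ q ∈ gD ℓ S, q.1 = q0.1 → q.2 ≤ q0.2) := by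
        constructor
        · intro h q hq hq1
          have h6 : shiftRow (sSup (S (ℓ + 1))) q.2 ≤ p.2 :=
            h (q.1, shiftRow (sSup (S (ℓ + 1))) q.2)
              (Or.inl (mem_shiftD.2 ⟨q, hq, rfl, rfl⟩)) (by show q.1 = p.1; omega)
          rw [e2] at h6
          exact shiftRow_le_iff.1 h6
        · intro h q hq hq1
          rcases hq with hq | hq
          · obtain ⟨r, hr, f1, f2⟩ := mem_shiftD.1 hq
            have h4 := h r hr (by omega)
            have h5 := (shiftRow_le_iff (m := sSup (S (ℓ + 1)))).2 h4
            omega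
          · obtain ⟨f1, f2⟩ := mem_newcol.1 hq
            omega
      rw [hLiff, hRiff]; exact ih hS.mono q0 hq0
    · -- new dot
      obtain ⟨e1, e2⟩ := mem_newcol.1 hp
      have hp2le : p.2 ≤ sSup (S (ℓ + 1)) := hmle _ e2
      have hp2ge : 1 ≤ p.2 := by
        obtain ⟨-, hbd⟩ := hS (ℓ+1) (by omega) le_rfl
        exact (hbd _ e2).1
      have hLiff : (∀ q ∈ gD (ℓ+1) S, q.2 = p.2 → p.1 ≤ q.1) ↔
          p.2 = sSup (S (ℓ + 1)) := by
        constructor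
        · intro h
          by_contra hne
          obtain ⟨q, hq, hq1, hq2⟩ := hrow p.2 hp2ge (by omega) hne
          have := h q hq hq2
          omega
        · intro hpm q hq hq2
          rcases hq with hq | hq
          · obtain ⟨r, hr, f1, f2⟩ := mem_shiftD.1 hq
            exfalso
            rcases shiftRow_cases (sSup (S (ℓ + 1))) r.2 with ⟨g1, g2⟩ | ⟨g1, g2⟩ <;> omega
          · obtain ⟨f1, f2⟩ := mem_newcol.1 hq
            omega
      have hRiff : (∀ q ∈ gD (ℓ+1) S, q.1 = p.1 → q.2 ≤ p.2) ↔
          p.2 = sSup (S (ℓ + 1)) := by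
        constructor
        · intro h
          have h2 : sSup (S (ℓ + 1)) ≤ p.2 := h (ℓ+1, sSup (S (ℓ + 1)))
            (Or.inr (mem_newcol.2 ⟨rfl, hmmem⟩)) (by show ℓ + 1 = p.1; omega)
          omega
        · intro hpm q hq hq1
          rcases hq with hq | hq
          · obtain ⟨r, hr, f1, f2⟩ := mem_shiftD.1 hq
            have h5 := (gD_subset hS.mono r hr).2.1
            rcases shiftRow_cases (sSup (S (ℓ + 1))) r.2 with ⟨g1, g2⟩ | ⟨g1, g2⟩ <;> omega
          · obtain ⟨f1, f2⟩ := mem_newcol.1 hq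
            have := hmle _ f2
            omega
      rw [hLiff, hRiff]

lemma gD_enr {ℓ : ℕ} {S : ℕ → Set ℕ} (hS : GoodData ℓ S) : EnrD ℓ (gD ℓ S) :=
  ⟨gD_subset hS, gD_cols hS, gD_rows hS, gD_iff hS⟩

lemma gD_inj : ∀ {ℓ : ℕ} {S S' : ℕ → Set ℕ}, GoodData ℓ S → GoodData ℓ S' →
    gD ℓ S = gD ℓ S' → ∀ i, 1 ≤ i → i ≤ ℓ → S i = S' i := by
  intro ℓ
  induction ℓ with
  | zero => intro S S' _ _ _ i h1 h2; omega
  | succ ℓ ih =>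
    intro S S' hS hS' h i h1 h2
    have hcol : S (ℓ+1) = S' (ℓ+1) := by
      ext j
      rw [← gD_topcol hS j, h, gD_topcol hS' j]
    have hm : sSup (S (ℓ+1)) = sSup (S' (ℓ+1)) := by rw [hcol]
    set m := sSup (S (ℓ+1)) with hmdef
    have hsub : ∀ (SS : ℕ → Set ℕ), GoodData (ℓ+1) SS →
        shiftD (sSup (SS (ℓ+1))) (gD ℓ SS) = {p ∈ gD (ℓ+1) SS | p.1 ≠ ℓ + 1} := by
      intro SS hSS
      ext p
      constructor
      · intro hp
        obtain ⟨q, hq, f1, f2⟩ := mem_shiftD.1 hp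
        have := (gD_subset hSS.mono q hq).2.1
        exact ⟨Or.inl hp, by omega⟩
      · rintro ⟨hp, hne⟩
        rcases hp with hp | hp
        · exact hp
        · exact absurd (mem_newcol.1 hp).1 hne
    have hsh : shiftD m (gD ℓ S) = shiftD m (gD ℓ S') := by
      have e1 := hsub S hS
      have e2 := hsub S' hS'
      rw [← hm] at e2
      rw [e1, e2, h]
    have hkey : ∀ (A B : Set (ℕ × ℕ)), shiftD m A = shiftD m B → A ⊆ B := by
      intro A B hAB p hp
      have h1 : (p.1, shiftRow m p.2) ∈ shiftD m B := by
        rw [← hAB]; exact mem_shiftD.2 ⟨p, hp, rfl, rfl⟩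
      obtain ⟨q, hq, f1, f2⟩ := mem_shiftD.1 h1
      have f1' : p.1 = q.1 := f1
      have f2' : shiftRow m p.2 = shiftRow m q.2 := f2
      have : p = q := Prod.ext f1' (shiftRow_inj f2')
      rw [this]; exact hq
    have hD : gD ℓ S = gD ℓ S' :=
      Set.Subset.antisymm (hkey _ _ hsh) (hkey _ _ hsh.symm)
    by_cases hi : i = ℓ + 1
    · rw [hi]; exact hcol
    · exact ih hS.mono hS'.mono hD i h1 (by omega)

lemma gD_surj : ∀ (ℓ : ℕ) (D : Set (ℕ × ℕ)), EnrD ℓ D →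
    ∃ S, GoodData ℓ S ∧ gD ℓ S = D := by
  intro ℓ
  induction ℓ with
  | zero =>
    intro D hD
    refine ⟨fun _ => ∅, fun i h1 h2 => by omega, ?_⟩
    have hDe : D = ∅ := Set.eq_empty_iff_forall_notMem.2 (fun p hp => by
      have := hD.1 p hp; omega)
    rw [hDe]; rfl
  | succ ℓ ih =>
    intro D hD
    obtain ⟨hbnd, hcols, hrows, hiff⟩ := hD
    set Sl : Set ℕ := {j | (ℓ + 1, j) ∈ D} with hSldef
    have hSlsub : ∀ j ∈ Sl, 1 ≤ j ∧ j ≤ ℓ + 1 := by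
      intro j hj
      have := hbnd (ℓ+1, j) hj
      exact ⟨this.2.2.1, this.2.2.2⟩
    have hSlne : Sl.Nonempty := by
      obtain ⟨j, hj⟩ := hcols (ℓ+1) (by omega) le_rfl
      exact ⟨j, hj⟩
    obtain ⟨hmmem, hmle⟩ := sSup_facts hSlne (fun j hj => (hSlsub j hj).2)
    set m := sSup Sl with hmdef
    have hm1 : 1 ≤ m := (hSlsub m hmmem).1
    have hm2 : m ≤ ℓ + 1 := (hSlsub m hmmem).2
    have claimA : ∀ q ∈ D, q.2 = m → q.1 = ℓ + 1 := by
      have hR : ∀ q ∈ D, q.1 = (ℓ+1, m).1 → q.2 ≤ (ℓ+1, m).2 := by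
        intro q hq hq1
        have hq1' : q.1 = ℓ + 1 := hq1
        have hmem2 : q.2 ∈ Sl := by
          show (ℓ+1, q.2) ∈ D
          have : ((ℓ+1 : ℕ), q.2) = q := Prod.ext hq1'.symm rfl
          rw [this]; exact hq
        exact hmle _ hmem2
      have hL := (hiff (ℓ+1, m) hmmem).2 hR
      intro q hq hq2
      have h1 : ℓ + 1 ≤ q.1 := hL q hq hq2
      have h2 := (hbnd q hq).2.1
      omega
    set D' : Set (ℕ × ℕ) :=
      (fun p : ℕ × ℕ => (p.1, unshiftRow m p.2)) '' {p ∈ D | p.1 ≠ ℓ + 1} with hD'def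
    have hmemD' : ∀ p, p ∈ D' ↔
        ∃ q ∈ D, q.1 ≠ ℓ + 1 ∧ p.1 = q.1 ∧ p.2 = unshiftRow m q.2 := by
      intro p
      constructor
      · rintro ⟨q, ⟨hq, hq1⟩, rfl⟩; exact ⟨q, hq, hq1, rfl, rfl⟩
      · rintro ⟨q, hq, hq1, f1, f2⟩
        refine ⟨q, ⟨hq, hq1⟩, ?_⟩
        show (q.1, unshiftRow m q.2) = p
        rw [← f1, ← f2]
    have hne_m : ∀ q ∈ D, q.1 ≠ ℓ + 1 → q.2 ≠ m := by
      intro q hq hq1 hq2; exact hq1 (claimA q hq hq2)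
    have hbndD' : ∀ p ∈ D', 1 ≤ p.1 ∧ p.1 ≤ ℓ ∧ 1 ≤ p.2 ∧ p.2 ≤ ℓ := by
      intro p hp
      obtain ⟨q, hq, hq1, f1, f2⟩ := (hmemD' p).1 hp
      have hb := hbnd q hq
      have hm3 := hne_m q hq hq1
      rcases unshiftRow_cases m q.2 with ⟨g1, g2⟩ | ⟨g1, g2⟩ <;> omega
    have hcolsD' : ∀ i, 1 ≤ i → i ≤ ℓ → ∃ j, (i, j) ∈ D' := by
      intro i h1 h2
      obtain ⟨j, hj⟩ := hcols i h1 (by omega)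
      exact ⟨unshiftRow m j, (hmemD' _).2 ⟨(i, j), hj, (by show i ≠ ℓ + 1; omega), rfl, rfl⟩⟩
    have hrowsD' : ∀ j', 1 ≤ j' → j' ≤ ℓ → ∃ i, (i, j') ∈ D' := by
      intro j' h1 h2
      set j := shiftRow m j' with hjdef
      have hjb : 1 ≤ j ∧ j ≤ ℓ + 1 ∧ j ≠ m := by
        rcases shiftRow_cases m j' with ⟨g1, g2⟩ | ⟨g1, g2⟩ <;> omega
      by_cases hjSl : j ∈ Sl
      · -- the dot (ℓ+1, j) is not topmost, hence not leftmost
        have hnotR : ¬ (∀ q ∈ D, q.1 = (ℓ+1, j).1 → q.2 ≤ (ℓ+1, j).2) := by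
          intro h
          have hmj : m ≤ j := h (ℓ+1, m) hmmem rfl
          have := hmle _ hjSl
          omega
        have hnotL : ¬ (∀ q ∈ D, q.2 = (ℓ+1, j).2 → (ℓ+1, j).1 ≤ q.1) := by
          intro h
          exact hnotR ((hiff (ℓ+1, j) hjSl).1 h)
        push_neg at hnotL
        obtain ⟨q, hq, hq2, hq1⟩ := hnotL
        have hq2' : q.2 = j := hq2
        have hq1' : q.1 < ℓ + 1 := hq1
        refine ⟨q.1, (hmemD' _).2 ⟨q, hq, by omega, rfl, ?_⟩⟩
        show j' = unshiftRow m q.2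
        rw [hq2', hjdef, unshift_shiftRow]
      · obtain ⟨i, hi⟩ := hrows j hjb.1 hjb.2.1
        have hine : i ≠ ℓ + 1 := by
          intro hie
          apply hjSl
          show (ℓ+1, j) ∈ D
          rw [← hie]; exact hi
        refine ⟨i, (hmemD' _).2 ⟨(i, j), hi, hine, rfl, ?_⟩⟩
        show j' = unshiftRow m (i, j).2
        show j' = unshiftRow m j
        rw [hjdef, unshift_shiftRow]
    have hiffD' : ∀ p ∈ D', (∀ q ∈ D', q.2 = p.2 → p.1 ≤ q.1) ↔
        (∀ q ∈ D', q.1 = p.1 → q.2 ≤ p.2) := by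
      intro p' hp'
      obtain ⟨p, hp, hp1, e1, e2⟩ := (hmemD' p').1 hp'
      have hpm := hne_m p hp hp1
      have hLiff : (∀ q ∈ D', q.2 = p'.2 → p'.1 ≤ q.1) ↔
          (∀ q ∈ D, q.2 = p.2 → p.1 ≤ q.1) := by
        constructor
        · intro h q hq hq2
          by_cases hq1 : q.1 = ℓ + 1
          · have := (hbnd p hp).2.1
            omega
          · have hmem2 : (q.1, unshiftRow m q.2) ∈ D' :=
              (hmemD' _).2 ⟨q, hq, hq1, rfl, rfl⟩
            have h5 : p'.1 ≤ q.1 := h (q.1, unshiftRow m q.2) hmem2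
              (by show unshiftRow m q.2 = p'.2; rw [e2, hq2])
            omega
        · intro h q' hq' hq2'
          obtain ⟨q, hq, hq1, f1, f2⟩ := (hmemD' q').1 hq'
          have hqm := hne_m q hq hq1
          have hq2 : q.2 = p.2 := by
            apply (unshift_eq_iff hqm hpm).1
            rw [← f2, ← e2, hq2']
          have := h q hq hq2
          omega
      have hRiff : (∀ q ∈ D', q.1 = p'.1 → q.2 ≤ p'.2) ↔
          (∀ q ∈ D, q.1 = p.1 → q.2 ≤ p.2) := by
        constructor
        · intro h q hq hq1
          have hq1ne : q.1 ≠ ℓ + 1 := by omega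
          have hmem2 : (q.1, unshiftRow m q.2) ∈ D' :=
            (hmemD' _).2 ⟨q, hq, hq1ne, rfl, rfl⟩
          have h5 : unshiftRow m q.2 ≤ p'.2 := h (q.1, unshiftRow m q.2) hmem2
            (by show q.1 = p'.1; omega)
          rw [e2] at h5
          exact (unshift_le_iff (hne_m q hq hq1ne) hpm).1 h5
        · intro h q' hq' hq1'
          obtain ⟨q, hq, hq1, f1, f2⟩ := (hmemD' q').1 hq'
          have h5 := h q hq (by omega)
          have h6 := (unshift_le_iff (hne_m q hq hq1) hpm).2 h5
          omega
      rw [hLiff, hRiff]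
      exact hiff p hp
    obtain ⟨S'', hS'', hg⟩ := ih D' ⟨hbndD', hcolsD', hrowsD', hiffD'⟩
    refine ⟨fun i => if i = ℓ + 1 then Sl else S'' i, ?_, ?_⟩
    · intro i h1 h2
      by_cases hi : i = ℓ + 1
      · subst hi
        simp only [if_pos rfl]
        exact ⟨hSlne, fun j hj => by have := hSlsub j hj; omega⟩
      · simp only [if_neg hi]
        exact hS'' i h1 (by omega)
    · have hred : (if (ℓ + 1 : ℕ) = ℓ + 1 then Sl else S'' (ℓ+1)) = Sl := if_pos rfl
      show insD (ℓ+1) (sSup (if (ℓ + 1 : ℕ) = ℓ + 1 then Sl else S'' (ℓ+1)))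
        (gD ℓ (fun i => if i = ℓ + 1 then Sl else S'' i))
        (if (ℓ + 1 : ℕ) = ℓ + 1 then Sl else S'' (ℓ+1)) = D
      rw [hred]
      have hg2 : gD ℓ (fun i => if i = ℓ + 1 then Sl else S'' i) = D' := by
        rw [gD_congr (S' := S'') (fun i hi1 hi2 => if_neg (by omega))]
        exact hg
      rw [hg2, ← hmdef]
      -- insD (ℓ+1) m D' Sl = D
      ext p
      constructor
      · intro hp
        rcases hp with hp | hp
        · obtain ⟨q', hq', f1, f2⟩ := mem_shiftD.1 hp
          obtain ⟨q, hq, hq1, g1, g2⟩ := (hmemD' q').1 hq'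
          have hq2m : q.2 ≠ m := hne_m q hq hq1
          have hq2b : 1 ≤ q.2 := (hbnd q hq).2.2.1
          have hpq : p = q := by
            apply Prod.ext (by omega)
            rw [f2, g2]
            exact shift_unshiftRow hq2m hq2b
          rw [hpq]; exact hq
        · obtain ⟨f1, f2⟩ := mem_newcol.1 hp
          have : ((ℓ+1 : ℕ), p.2) = p := Prod.ext f1.symm rfl
          rw [← this]; exact f2
      · intro hp
        by_cases h1 : p.1 = ℓ + 1
        · right
          refine mem_newcol.2 ⟨h1, ?_⟩
          show (ℓ+1, p.2) ∈ D
          have : ((ℓ+1 : ℕ), p.2) = p := Prod.ext h1.symm rfl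
          rw [this]; exact hp
        · left
          apply mem_shiftD.2
          refine ⟨(p.1, unshiftRow m p.2), (hmemD' _).2 ⟨p, hp, h1, rfl, rfl⟩, rfl, ?_⟩
          show p.2 = shiftRow m (unshiftRow m p.2)
          exact (shift_unshiftRow (hne_m p hp h1) ((hbnd p hp).2.2.1)).symm

lemma newcol_inj (ℓ : ℕ) : Function.Injective (fun j => ((ℓ, j) : ℕ × ℕ)) :=
  fun a b h => congrArg Prod.snd h

lemma ncard_shiftD (m : ℕ) (D : Set (ℕ × ℕ)) : (shiftD m D).ncard = D.ncard :=
  Set.ncard_image_of_injective _ (shiftFun_inj m)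

lemma ncard_newcol (ℓ : ℕ) (S : Set ℕ) : (newcol ℓ S).ncard = S.ncard :=
  Set.ncard_image_of_injective _ (newcol_inj ℓ)

lemma GoodData.Sfin {ℓ : ℕ} {S : ℕ → Set ℕ} (hS : GoodData ℓ S) {i : ℕ}
    (h1 : 1 ≤ i) (h2 : i ≤ ℓ) : (S i).Finite := by
  apply Set.Finite.subset (Set.finite_Icc 1 i)
  intro j hj
  exact Set.mem_Icc.2 ((hS i h1 h2).2 j hj)

lemma disjoint_cols {ℓ : ℕ} {A B : Set (ℕ × ℕ)} (hA : ∀ p ∈ A, p.1 ≤ ℓ)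
    (hB : ∀ p ∈ B, p.1 = ℓ + 1) : Disjoint A B :=
  Set.disjoint_left.2 (fun p hp hq => by have := hA p hp; have := hB p hq; omega)

lemma shiftD_col {m : ℕ} {D : Set (ℕ × ℕ)} {ℓ : ℕ} (hD : ∀ p ∈ D, p.1 ≤ ℓ) :
    ∀ p ∈ shiftD m D, p.1 ≤ ℓ := by
  intro p hp
  obtain ⟨q, hq, f1, f2⟩ := mem_shiftD.1 hp
  have := hD q hq
  omega

lemma newcol_col {ℓ : ℕ} {S : Set ℕ} : ∀ p ∈ newcol ℓ S, p.1 = ℓ :=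
  fun p hp => (mem_newcol.1 hp).1

lemma gD_ncard {ℓ : ℕ} {S : ℕ → Set ℕ} (hS : GoodData ℓ S) :
    (gD ℓ S).ncard = (stD ℓ S).ncard := by
  induction ℓ with
  | zero =>
    have h0 : stD 0 S = ∅ :=
      Set.eq_empty_iff_forall_notMem.2 (by rintro p ⟨a, b, c⟩; omega)
    rw [h0]; rfl
  | succ ℓ ih =>
    have hfin : (S (ℓ+1)).Finite := hS.Sfin (by omega) le_rfl
    have hdisj : Disjoint (shiftD (sSup (S (ℓ+1))) (gD ℓ S)) (newcol (ℓ+1) (S (ℓ+1))) :=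
      disjoint_cols (shiftD_col (fun p hp => (gD_subset hS.mono p hp).2.1)) newcol_col
    have h1 : (gD (ℓ+1) S).ncard = (gD ℓ S).ncard + (S (ℓ+1)).ncard := by
      show (shiftD (sSup (S (ℓ+1))) (gD ℓ S) ∪ newcol (ℓ+1) (S (ℓ+1))).ncard = _
      rw [Set.ncard_union_eq hdisj ((gD_finite hS.mono).image _) (hfin.image _),
        ncard_shiftD, ncard_newcol]
    have e2 : stD (ℓ+1) S = stD ℓ S ∪ newcol (ℓ+1) (S (ℓ+1)) := by
      ext p
      constructor
      · rintro ⟨g1, g2, g3⟩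
        by_cases hp1 : p.1 = ℓ + 1
        · right; exact mem_newcol.2 ⟨hp1, by rw [← hp1]; exact g3⟩
        · left; exact ⟨g1, by omega, g3⟩
      · rintro (⟨g1, g2, g3⟩ | hp)
        · exact ⟨g1, by omega, g3⟩
        · obtain ⟨f1, f2⟩ := mem_newcol.1 hp
          exact ⟨by omega, by omega, by rw [f1]; exact f2⟩
    have hdisj2 : Disjoint (stD ℓ S) (newcol (ℓ+1) (S (ℓ+1))) :=
      disjoint_cols (fun p hp => (stD_subset hS.mono p hp).2.1) newcol_col
    have h2 : (stD (ℓ+1) S).ncard = (stD ℓ S).ncard + (S (ℓ+1)).ncard := by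
      rw [e2, Set.ncard_union_eq hdisj2 (stD_finite hS.mono) (hfin.image _), ncard_newcol]
    rw [h1, h2, ih hS.mono]

def lminS (D : Set (ℕ × ℕ)) : Set (ℕ × ℕ) := {p ∈ D | ∀ q ∈ D, q.2 < p.2 → p.1 < q.1}

lemma gD_lmin {ℓ : ℕ} {S : ℕ → Set ℕ} (hS : GoodData ℓ S) :
    (lminS (gD ℓ S)).ncard = {i | 1 ≤ i ∧ i ≤ ℓ ∧ 1 ∈ S i}.ncard := by
  induction ℓ with
  | zero =>
    have h0 : lminS (gD 0 S) = ∅ :=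
      Set.eq_empty_iff_forall_notMem.2 (by rintro p ⟨hp, -⟩; simp [gD] at hp)
    have h0' : {i | 1 ≤ i ∧ i ≤ 0 ∧ 1 ∈ S i} = ∅ :=
      Set.eq_empty_iff_forall_notMem.2 (by rintro i ⟨a, b, c⟩; omega)
    rw [h0, h0']
    simp
  | succ ℓ ih =>
    obtain ⟨hmmem, hm1, hm2, hmle⟩ := hS.m_facts
    have hset : lminS (gD (ℓ+1) S) =
        shiftD (sSup (S (ℓ+1))) (lminS (gD ℓ S)) ∪ newcol (ℓ+1) {j | j ∈ S (ℓ+1) ∧ j = 1} := by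
      ext p
      constructor
      · rintro ⟨hp, hmin⟩
        rcases hp with hp | hp
        · left
          obtain ⟨q, hq, f1, f2⟩ := mem_shiftD.1 hp
          apply mem_shiftD.2
          refine ⟨q, ⟨hq, ?_⟩, f1, f2⟩
          intro r hr hr2
          have h5 : p.1 < r.1 := hmin (r.1, shiftRow (sSup (S (ℓ+1))) r.2)
            (Or.inl (mem_shiftD.2 ⟨r, hr, rfl, rfl⟩))
            (by show shiftRow (sSup (S (ℓ+1))) r.2 < p.2; rw [f2]
                exact shiftRow_lt_iff.2 hr2)
          omega
        · right
          obtain ⟨f1, f2⟩ := mem_newcol.1 hp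
          refine mem_newcol.2 ⟨f1, f2, ?_⟩
          by_contra hne
          have hp2a : p.2 ≤ ℓ + 1 := ((hS (ℓ+1) (by omega) le_rfl).2 _ f2).2
          have hp2b : 1 ≤ p.2 := ((hS (ℓ+1) (by omega) le_rfl).2 _ f2).1
          obtain ⟨i0, hi0⟩ := gD_rows hS (p.2 - 1) (by omega) (by omega)
          have h5 : p.1 < i0 := hmin (i0, p.2 - 1) hi0 (by show p.2 - 1 < p.2; omega)
          have h6 : i0 ≤ ℓ + 1 := (gD_subset hS _ hi0).2.1
          omega
      · intro hp
        rcases hp with hp | hp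
        · obtain ⟨q, hqfull, f1, f2⟩ := mem_shiftD.1 hp
          obtain ⟨hq, hqmin⟩ := hqfull
          refine ⟨Or.inl (mem_shiftD.2 ⟨q, hq, f1, f2⟩), ?_⟩
          intro r hr hr2
          rcases hr with hr | hr
          · obtain ⟨r0, hr0, g1, g2⟩ := mem_shiftD.1 hr
            have h5 : r0.2 < q.2 := by
              have h7 : shiftRow (sSup (S (ℓ+1))) r0.2 < shiftRow (sSup (S (ℓ+1))) q.2 := by
                rw [← g2, ← f2]; exact hr2
              exact shiftRow_lt_iff.1 h7
            have h6 := hqmin r0 hr0 h5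
            omega
          · obtain ⟨g1, g2⟩ := mem_newcol.1 hr
            have := (gD_subset hS.mono q hq).2.1
            omega
        · obtain ⟨f1, f2, f3⟩ := mem_newcol.1 hp
          refine ⟨Or.inr (mem_newcol.2 ⟨f1, f2⟩), ?_⟩
          intro r hr hr2
          have := gD_subset hS r hr
          omega
    have hfinl : (lminS (gD ℓ S)).Finite :=
      Set.Finite.subset (gD_finite hS.mono) (Set.sep_subset _ _)
    have hfins : ({j | j ∈ S (ℓ+1) ∧ j = 1} : Set ℕ).Finite :=
      Set.Finite.subset (hS.Sfin (by omega) le_rfl) (fun j hj => hj.1)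
    have hdisj : Disjoint (shiftD (sSup (S (ℓ+1))) (lminS (gD ℓ S)))
        (newcol (ℓ+1) {j | j ∈ S (ℓ+1) ∧ j = 1}) :=
      disjoint_cols (shiftD_col (fun p hp => (gD_subset hS.mono p hp.1).2.1)) newcol_col
    rw [hset, Set.ncard_union_eq hdisj (hfinl.image _) (hfins.image _),
      ncard_shiftD, ncard_newcol, ih hS.mono]
    have hsplit : {i | 1 ≤ i ∧ i ≤ ℓ + 1 ∧ 1 ∈ S i} =
        {i | 1 ≤ i ∧ i ≤ ℓ ∧ 1 ∈ S i} ∪ {i | i = ℓ + 1 ∧ 1 ∈ S i} := by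
      ext i
      constructor
      · rintro ⟨a, b, c⟩
        by_cases h : i = ℓ + 1
        · right; exact ⟨h, c⟩
        · left; exact ⟨a, by omega, c⟩
      · rintro (⟨a, b, c⟩ | ⟨a, c⟩)
        · exact ⟨a, by omega, c⟩
        · exact ⟨by omega, by omega, c⟩
    have hdisj2 : Disjoint {i | 1 ≤ i ∧ i ≤ ℓ ∧ 1 ∈ S i} {i | i = ℓ + 1 ∧ 1 ∈ S i} :=
      Set.disjoint_left.2 (fun i hi hi' => by
        obtain ⟨a, b, c⟩ := hi; obtain ⟨d, e⟩ := hi'; omega)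
    have hfin1 : ({i | 1 ≤ i ∧ i ≤ ℓ ∧ 1 ∈ S i} : Set ℕ).Finite :=
      Set.Finite.subset (Set.finite_Icc 1 ℓ) (fun i hi => Set.mem_Icc.2 ⟨hi.1, hi.2.1⟩)
    have hfin2 : ({i | i = ℓ + 1 ∧ 1 ∈ S i} : Set ℕ).Finite :=
      Set.Finite.subset (Set.finite_singleton (ℓ+1)) (fun i hi => hi.1)
    rw [hsplit, Set.ncard_union_eq hdisj2 hfin1 hfin2]
    congr 1
    by_cases h1 : 1 ∈ S (ℓ + 1)
    · have ea : {j | j ∈ S (ℓ+1) ∧ j = 1} = {1} := by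
        ext j
        constructor
        · rintro ⟨-, h⟩; exact h
        · rintro h; exact ⟨by rw [h]; exact h1, h⟩
      have eb : {i | i = ℓ + 1 ∧ 1 ∈ S i} = {ℓ+1} := by
        ext i
        constructor
        · rintro ⟨h, -⟩; exact h
        · rintro h; exact ⟨h, by rw [h]; exact h1⟩
      rw [ea, eb, Set.ncard_singleton, Set.ncard_singleton]
    · have ea : {j | j ∈ S (ℓ+1) ∧ j = 1} = ∅ :=
        Set.eq_empty_iff_forall_notMem.2 (by rintro j ⟨hj, rfl⟩; exact h1 hj)
      have eb : {i | i = ℓ + 1 ∧ 1 ∈ S i} = ∅ :=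
        Set.eq_empty_iff_forall_notMem.2 (by rintro i ⟨rfl, hi⟩; exact h1 hi)
      rw [ea, eb]

lemma gD_comp {ℓ : ℕ} {S : ℕ → Set ℕ} (hS : GoodData ℓ S) (k : ℕ) :
    (∀ p ∈ stD ℓ S, k < p.1 → k < p.2) ↔
    (∀ p ∈ gD ℓ S, (p.1 ≤ k ∧ p.2 ≤ k) ∨ (k < p.1 ∧ k < p.2)) := by
  induction ℓ with
  | zero =>
    constructor
    · intro _ p hp; simp [gD] at hp
    · rintro _ p ⟨h1, h2, h3⟩ h; omega
  | succ ℓ ih =>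
    obtain ⟨hmmem, hm1, hm2, hmle⟩ := hS.m_facts
    by_cases hk : ℓ + 1 ≤ k
    · constructor
      · intro _ p hp
        have := gD_subset hS p hp
        left; omega
      · intro _ p hp hgt
        have := stD_subset hS p hp
        omega
    · have hL : (∀ p ∈ stD (ℓ+1) S, k < p.1 → k < p.2) ↔
          ((∀ p ∈ stD ℓ S, k < p.1 → k < p.2) ∧ ∀ j ∈ S (ℓ+1), k < j) := by
        constructor
        · intro h
          refine ⟨fun p hp hgt => h p ⟨hp.1, by have := hp.2.1; omega, hp.2.2⟩ hgt,
            fun j hj => ?_⟩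
          have h6 : k < j := h (ℓ+1, j)
            ⟨(by show (1:ℕ) ≤ ℓ+1; omega), le_rfl, hj⟩ (by show k < ℓ+1; omega)
          exact h6
        · rintro ⟨h1, h2⟩ p ⟨g1, g2, g3⟩ hgt
          by_cases hp1 : p.1 = ℓ + 1
          · apply h2; rw [← hp1]; exact g3
          · exact h1 p ⟨g1, by omega, g3⟩ hgt
      have hR : (∀ p ∈ gD (ℓ+1) S, (p.1 ≤ k ∧ p.2 ≤ k) ∨ (k < p.1 ∧ k < p.2)) ↔
          ((∀ p ∈ gD ℓ S, (p.1 ≤ k ∧ shiftRow (sSup (S (ℓ+1))) p.2 ≤ k) ∨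
            (k < p.1 ∧ k < shiftRow (sSup (S (ℓ+1))) p.2)) ∧ ∀ j ∈ S (ℓ+1), k < j) := by
        constructor
        · intro h
          constructor
          · intro p hp
            exact h (p.1, shiftRow (sSup (S (ℓ+1))) p.2)
              (Or.inl (mem_shiftD.2 ⟨p, hp, rfl, rfl⟩))
          · intro j hj
            have h5 : ((ℓ+1 : ℕ) ≤ k ∧ j ≤ k) ∨ (k < ℓ+1 ∧ k < j) :=
              h (ℓ+1, j) (Or.inr (mem_newcol.2 ⟨rfl, hj⟩))
            omega
        · rintro ⟨h1, h2⟩ p hp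
          rcases hp with hp | hp
          · obtain ⟨q, hq, f1, f2⟩ := mem_shiftD.1 hp
            have h5 := h1 q hq
            omega
          · obtain ⟨f1, f2⟩ := mem_newcol.1 hp
            have := h2 _ f2
            omega
      rw [hL, hR]
      constructor
      · rintro ⟨h1, h2⟩
        refine ⟨?_, h2⟩
        have hkm : k < sSup (S (ℓ+1)) := h2 _ hmmem
        intro p hp
        have h5 := (ih hS.mono).1 h1 p hp
        rcases shiftRow_cases (sSup (S (ℓ+1))) p.2 with ⟨g1, g2⟩ | ⟨g1, g2⟩ <;> omega
      · rintro ⟨h1, h2⟩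
        refine ⟨?_, h2⟩
        have hkm : k < sSup (S (ℓ+1)) := h2 _ hmmem
        apply (ih hS.mono).2
        intro p hp
        have h5 := h1 p hp
        rcases shiftRow_cases (sSup (S (ℓ+1))) p.2 with ⟨g1, g2⟩ | ⟨g1, g2⟩ <;> omega

def rmaxSq (D : Set (ℕ × ℕ)) : Set (ℕ × ℕ) := {p ∈ D | ∀ q ∈ D, p.1 < q.1 → q.2 < p.2}

def rmaxSt (D : Set (ℕ × ℕ)) : Set (ℕ × ℕ) :=
  {p ∈ D | ∀ q ∈ D, p.1 < q.1 → p.1 - p.2 < q.1 - q.2}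

lemma gD_rmax {ℓ : ℕ} {S : ℕ → Set ℕ} (hS : GoodData ℓ S) : ∀ t,
    {p ∈ rmaxSt (stD ℓ S) | p.1 - p.2 < t}.ncard
      = {p ∈ rmaxSq (gD ℓ S) | ℓ < p.2 + t}.ncard := by
  induction ℓ with
  | zero =>
    intro t
    have h0 : {p ∈ rmaxSt (stD 0 S) | p.1 - p.2 < t} = ∅ :=
      Set.eq_empty_iff_forall_notMem.2 (by rintro p ⟨⟨⟨a, b, c⟩, -⟩, -⟩; omega)
    have h0' : {p ∈ rmaxSq (gD 0 S) | 0 < p.2 + t} = ∅ :=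
      Set.eq_empty_iff_forall_notMem.2 (by rintro p ⟨⟨hp, -⟩, -⟩; simp [gD] at hp)
    rw [h0, h0']
  | succ ℓ ih =>
    intro t
    obtain ⟨hmmem, hm1, hm2, hmle⟩ := hS.m_facts
    have hLset : {p ∈ rmaxSt (stD (ℓ+1) S) | p.1 - p.2 < t} =
        {p ∈ rmaxSt (stD ℓ S) | p.1 - p.2 < min t (ℓ + 1 - sSup (S (ℓ+1)))} ∪
        newcol (ℓ+1) {j | j ∈ S (ℓ+1) ∧ ℓ + 1 < j + t} := by
      ext p
      constructor
      · rintro ⟨⟨hp, hmax⟩, hflt⟩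
        obtain ⟨g1, g2, g3⟩ := hp
        rcases Nat.lt_or_ge p.1 (ℓ+1) with hc | hc
        · left
          have h7 : p.1 - p.2 < ℓ + 1 - sSup (S (ℓ+1)) :=
            hmax (ℓ+1, sSup (S (ℓ+1)))
              ⟨(by show (1:ℕ) ≤ ℓ+1; omega), le_rfl, hmmem⟩ (by show p.1 < ℓ+1; omega)
          refine ⟨⟨⟨g1, by omega, g3⟩, ?_⟩, by omega⟩
          intro q hq hlt
          exact hmax q ⟨hq.1, by have := hq.2.1; omega, hq.2.2⟩ hlt
        · right
          have he : p.1 = ℓ + 1 := by omega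
          have hmem2 : p.2 ∈ S (ℓ+1) := by rw [← he]; exact g3
          have hb := (hS (ℓ+1) (by omega) le_rfl).2 _ hmem2
          exact mem_newcol.2 ⟨he, hmem2, by omega⟩
      · rintro (⟨⟨hp, hmax⟩, hflt⟩ | hp)
        · obtain ⟨g1, g2, g3⟩ := hp
          refine ⟨⟨⟨g1, by omega, g3⟩, ?_⟩, by omega⟩
          intro q hq hlt
          obtain ⟨f1, f2, f3⟩ := hq
          by_cases hq1 : q.1 = ℓ + 1
          · have hmem2 : q.2 ∈ S (ℓ+1) := by rw [← hq1]; exact f3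
            have := hmle _ hmem2
            omega
          · exact hmax q ⟨f1, by omega, f3⟩ hlt
        · obtain ⟨f1, f2, f3⟩ := mem_newcol.1 hp
          have hb := (hS (ℓ+1) (by omega) le_rfl).2 _ f2
          refine ⟨⟨⟨by omega, by omega, by rw [f1]; exact f2⟩, ?_⟩, by omega⟩
          intro q hq hlt
          have := hq.2.1
          omega
    have hRset : {p ∈ rmaxSq (gD (ℓ+1) S) | ℓ + 1 < p.2 + t} =
        shiftD (sSup (S (ℓ+1)))
          {p ∈ rmaxSq (gD ℓ S) | ℓ < p.2 + min t (ℓ + 1 - sSup (S (ℓ+1)))} ∪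
        newcol (ℓ+1) {j | j ∈ S (ℓ+1) ∧ ℓ + 1 < j + t} := by
      ext p
      constructor
      · rintro ⟨⟨hp, hmax⟩, hflt⟩
        rcases hp with hp | hp
        · left
          obtain ⟨q, hq, f1, f2⟩ := mem_shiftD.1 hp
          have hqb := gD_subset hS.mono q hq
          apply mem_shiftD.2
          refine ⟨q, ⟨⟨hq, ?_⟩, ?_⟩, f1, f2⟩
          · intro r hr hlt
            have h5 : shiftRow (sSup (S (ℓ+1))) r.2 < p.2 :=
              hmax (r.1, shiftRow (sSup (S (ℓ+1))) r.2)
                (Or.inl (mem_shiftD.2 ⟨r, hr, rfl, rfl⟩)) (by show p.1 < r.1; omega)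
            have h6 : shiftRow (sSup (S (ℓ+1))) r.2 < shiftRow (sSup (S (ℓ+1))) q.2 := by
              rw [← f2]; exact h5
            exact shiftRow_lt_iff.1 h6
          · have h7 : sSup (S (ℓ+1)) < p.2 := hmax (ℓ+1, sSup (S (ℓ+1)))
              (Or.inr (mem_newcol.2 ⟨rfl, hmmem⟩)) (by show p.1 < ℓ+1; omega)
            rcases shiftRow_cases (sSup (S (ℓ+1))) q.2 with ⟨g3, g4⟩ | ⟨g3, g4⟩ <;> omega
        · right
          obtain ⟨f1, f2⟩ := mem_newcol.1 hp
          exact mem_newcol.2 ⟨f1, f2, by omega⟩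
      · intro hp
        rcases hp with hp | hp
        · obtain ⟨q, hqq, f1, f2⟩ := mem_shiftD.1 hp
          obtain ⟨⟨hq, hqmax⟩, hqflt⟩ := hqq
          have hqb := gD_subset hS.mono q hq
          have hq2m : sSup (S (ℓ+1)) ≤ q.2 := by omega
          refine ⟨⟨Or.inl (mem_shiftD.2 ⟨q, hq, f1, f2⟩), ?_⟩, ?_⟩
          · intro r hr hlt
            rcases hr with hr | hr
            · obtain ⟨r0, hr0, g1, g2⟩ := mem_shiftD.1 hr
              have h5 : r0.2 < q.2 := hqmax r0 hr0 (by omega)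
              rw [f2, g2]
              exact shiftRow_lt_iff.2 h5
            · obtain ⟨g1, g2⟩ := mem_newcol.1 hr
              have h5 := hmle _ g2
              rcases shiftRow_cases (sSup (S (ℓ+1))) q.2 with ⟨g3, g4⟩ | ⟨g3, g4⟩ <;> omega
          · rcases shiftRow_cases (sSup (S (ℓ+1))) q.2 with ⟨g3, g4⟩ | ⟨g3, g4⟩ <;> omega
        · obtain ⟨f1, f2, f3⟩ := mem_newcol.1 hp
          refine ⟨⟨Or.inr (mem_newcol.2 ⟨f1, f2⟩), ?_⟩, by omega⟩
          intro r hr hlt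
          have := gD_subset hS r hr
          omega
    rw [hLset, hRset]
    have hfinS : (S (ℓ+1)).Finite := hS.Sfin (by omega) le_rfl
    have hfin1 : ({p ∈ rmaxSt (stD ℓ S) | p.1 - p.2 < min t (ℓ + 1 - sSup (S (ℓ+1)))}).Finite :=
      Set.Finite.subset (stD_finite hS.mono) (fun p hp => hp.1.1)
    have hfin2 : ({j | j ∈ S (ℓ+1) ∧ ℓ + 1 < j + t} : Set ℕ).Finite :=
      Set.Finite.subset hfinS (fun j hj => hj.1)
    have hfin3 : ({p ∈ rmaxSq (gD ℓ S) | ℓ < p.2 + min t (ℓ + 1 - sSup (S (ℓ+1)))}).Finite :=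
      Set.Finite.subset (gD_finite hS.mono) (fun p hp => hp.1.1)
    have hdL : Disjoint {p ∈ rmaxSt (stD ℓ S) | p.1 - p.2 < min t (ℓ + 1 - sSup (S (ℓ+1)))}
        (newcol (ℓ+1) {j | j ∈ S (ℓ+1) ∧ ℓ + 1 < j + t}) :=
      disjoint_cols (fun p hp => (stD_subset hS.mono p hp.1.1).2.1) newcol_col
    have hdR : Disjoint (shiftD (sSup (S (ℓ+1)))
          {p ∈ rmaxSq (gD ℓ S) | ℓ < p.2 + min t (ℓ + 1 - sSup (S (ℓ+1)))})
        (newcol (ℓ+1) {j | j ∈ S (ℓ+1) ∧ ℓ + 1 < j + t}) :=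
      disjoint_cols (shiftD_col (fun p hp => (gD_subset hS.mono p hp.1.1).2.1)) newcol_col
    rw [Set.ncard_union_eq hdL hfin1 (hfin2.image _),
      Set.ncard_union_eq hdR (hfin3.image _) (hfin2.image _),
      ncard_shiftD, ncard_newcol, ih hS.mono]

def trD (a : ℕ) (D : Set (ℕ × ℕ)) : Set (ℕ × ℕ) :=
  (fun p : ℕ × ℕ => (p.1 + a, p.2 + a)) '' D

lemma mem_trD {a : ℕ} {D : Set (ℕ × ℕ)} {p : ℕ × ℕ} :
    p ∈ trD a D ↔ ∃ q ∈ D, p.1 = q.1 + a ∧ p.2 = q.2 + a := by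
  constructor
  · rintro ⟨q, hq, rfl⟩; exact ⟨q, hq, rfl, rfl⟩
  · rintro ⟨q, hq, h1, h2⟩
    refine ⟨q, hq, ?_⟩
    show (q.1 + a, q.2 + a) = p
    rw [← h1, ← h2]

lemma trD_union (a : ℕ) (X Y : Set (ℕ × ℕ)) : trD a (X ∪ Y) = trD a X ∪ trD a Y :=
  Set.image_union _ _ _

lemma sSup_image_add (a : ℕ) (s : Set ℕ) (hne : s.Nonempty) {b : ℕ}
    (hb : ∀ x ∈ s, x ≤ b) : sSup ((fun j => j + a) '' s) = sSup s + a := by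
  obtain ⟨hmem, hle⟩ := sSup_facts hne hb
  apply IsGreatest.csSup_eq
  constructor
  · exact ⟨sSup s, hmem, rfl⟩
  · rintro x ⟨y, hy, rfl⟩
    exact Nat.add_le_add_right (hle y hy) a

lemma shiftD_id {m : ℕ} {D : Set (ℕ × ℕ)} (h : ∀ p ∈ D, p.2 < m) : shiftD m D = D := by
  ext p
  constructor
  · intro hp
    obtain ⟨q, hq, f1, f2⟩ := mem_shiftD.1 hp
    have h5 := h q hq
    have hpq : p = q := Prod.ext f1
      (by rcases shiftRow_cases m q.2 with ⟨g1, g2⟩ | ⟨g1, g2⟩ <;> omega)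
    rw [hpq]; exact hq
  · intro hp
    apply mem_shiftD.2
    refine ⟨p, hp, rfl, ?_⟩
    have h5 := h p hp
    rcases shiftRow_cases m p.2 with ⟨g1, g2⟩ | ⟨g1, g2⟩ <;> omega

lemma shiftD_trD (m a : ℕ) (D : Set (ℕ × ℕ)) :
    shiftD (m + a) (trD a D) = trD a (shiftD m D) := by
  ext p
  constructor
  · intro hp
    obtain ⟨q, hq, f1, f2⟩ := mem_shiftD.1 hp
    obtain ⟨r, hr, g1, g2⟩ := mem_trD.1 hq
    apply mem_trD.2
    refine ⟨(r.1, shiftRow m r.2), mem_shiftD.2 ⟨r, hr, rfl, rfl⟩,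
      (by show p.1 = r.1 + a; omega), ?_⟩
    show p.2 = shiftRow m r.2 + a
    rcases shiftRow_cases (m + a) q.2 with ⟨g3, g4⟩ | ⟨g3, g4⟩ <;>
      rcases shiftRow_cases m r.2 with ⟨g5, g6⟩ | ⟨g5, g6⟩ <;> omega
  · intro hp
    obtain ⟨q, hq, f1, f2⟩ := mem_trD.1 hp
    obtain ⟨r, hr, g1, g2⟩ := mem_shiftD.1 hq
    apply mem_shiftD.2
    refine ⟨(r.1 + a, r.2 + a), mem_trD.2 ⟨r, hr, rfl, rfl⟩,
      (by show p.1 = r.1 + a; omega), ?_⟩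
    show p.2 = shiftRow (m + a) (r.2 + a)
    rcases shiftRow_cases (m + a) (r.2 + a) with ⟨g3, g4⟩ | ⟨g3, g4⟩ <;>
      rcases shiftRow_cases m r.2 with ⟨g5, g6⟩ | ⟨g5, g6⟩ <;> omega

lemma newcol_trD (a b : ℕ) (S : Set ℕ) :
    newcol (a + b) ((fun j => j + a) '' S) = trD a (newcol b S) := by
  ext p
  constructor
  · intro hp
    obtain ⟨f1, f2⟩ := mem_newcol.1 hp
    obtain ⟨j, hj, f3⟩ := f2
    have f3' : j + a = p.2 := f3
    apply mem_trD.2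
    exact ⟨(b, j), mem_newcol.2 ⟨rfl, hj⟩, (by show p.1 = b + a; omega),
      (by show p.2 = j + a; omega)⟩
  · intro hp
    obtain ⟨q, hq, f1, f2⟩ := mem_trD.1 hp
    obtain ⟨g1, g2⟩ := mem_newcol.1 hq
    exact mem_newcol.2 ⟨by omega, ⟨q.2, g2, by show q.2 + a = p.2; omega⟩⟩

lemma gD_dsum {a : ℕ} {Sa Sab : ℕ → Set ℕ} (hSa : GoodData a Sa) :
    ∀ (b : ℕ) (Sb : ℕ → Set ℕ), GoodData b Sb →
    (∀ i, 1 ≤ i → i ≤ a → Sab i = Sa i) →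
    (∀ i, 1 ≤ i → i ≤ b → Sab (a + i) = (fun j => j + a) '' Sb i) →
    gD (a + b) Sab = gD a Sa ∪ trD a (gD b Sb) := by
  intro b
  induction b with
  | zero =>
    intro Sb _ h1 _
    have he : trD a (gD 0 Sb) = ∅ := by ext p; simp [gD, trD]
    rw [he, Set.union_empty]
    exact gD_congr h1
  | succ b ih =>
    intro Sb hSb h1 h2
    obtain ⟨hmmem, hm1, hm2, hmle⟩ := hSb.m_facts
    have hSab : Sab (a + (b+1)) = (fun j => j + a) '' Sb (b+1) := h2 (b+1) (by omega) le_rfl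
    have hmsum : sSup (Sab (a + (b+1))) = sSup (Sb (b+1)) + a := by
      rw [hSab]
      exact sSup_image_add a _ ⟨_, hmmem⟩
        (fun x hx => ((hSb (b+1) (by omega) le_rfl).2 x hx).2)
    have hIH : gD (a + b) Sab = gD a Sa ∪ trD a (gD b Sb) :=
      ih Sb hSb.mono h1 (fun i hi1 hi2 => h2 i hi1 (by omega))
    show insD (a + (b+1)) (sSup (Sab (a + (b+1)))) (gD (a + b) Sab) (Sab (a + (b+1)))
      = gD a Sa ∪ trD a (gD (b+1) Sb)
    rw [hmsum, hSab, hIH]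
    show shiftD (sSup (Sb (b+1)) + a) (gD a Sa ∪ trD a (gD b Sb)) ∪
        newcol (a + (b+1)) ((fun j => j + a) '' Sb (b+1)) = _
    have hid : shiftD (sSup (Sb (b+1)) + a) (gD a Sa) = gD a Sa :=
      shiftD_id (fun p hp => by have := (gD_subset hSa p hp).2.2.2; omega)
    have hsplit : shiftD (sSup (Sb (b+1)) + a) (gD a Sa ∪ trD a (gD b Sb))
        = shiftD (sSup (Sb (b+1)) + a) (gD a Sa) ∪
          shiftD (sSup (Sb (b+1)) + a) (trD a (gD b Sb)) :=
      Set.image_union _ _ _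
    rw [hsplit, hid, shiftD_trD, newcol_trD, Set.union_assoc, ← trD_union]
    rfl

/-! ### Filling-level constructions -/

def colS (T : Filling) : ℕ → Set ℕ := fun i => {j | (i, j) ∈ T.dots}

lemma dots_eq_stD (T : Filling) : T.dots = stD T.len (colS T) := by
  ext p
  constructor
  · intro hp
    obtain ⟨h1, h2, h3, h4⟩ := T.dots_mem p hp
    refine ⟨h1, h2, ?_⟩
    show (p.1, p.2) ∈ T.dots
    rw [Prod.mk.eta]
    exact hp
  · rintro ⟨h1, h2, h3⟩
    have h4 : (p.1, p.2) ∈ T.dots := h3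
    rwa [Prod.mk.eta] at h4

lemma good_of {T : Filling} (hpos : T.ColumnPositive) (hst : T.Staircase) :
    GoodData T.len (colS T) := by
  intro i h1 h2
  refine ⟨hpos i h1 h2, ?_⟩
  intro j hj
  have hmem : (i, j) ∈ T.dots := hj
  obtain ⟨g1, g2, g3, g4⟩ := T.dots_mem _ hmem
  have g3' : (1 : ℕ) ≤ j := g3
  have g4' : j ≤ T.shape i := g4
  rw [hst i h1 h2] at g4'
  exact ⟨g3', g4'⟩

def mkSquare (ℓ : ℕ) (hℓ : 1 ≤ ℓ) (D : Set (ℕ × ℕ))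
    (hD : ∀ p ∈ D, 1 ≤ p.1 ∧ p.1 ≤ ℓ ∧ 1 ≤ p.2 ∧ p.2 ≤ ℓ) : Filling where
  len := ℓ
  shape := fun i => if 1 ≤ i ∧ i ≤ ℓ then ℓ else 0
  dots := D
  len_pos := hℓ
  shape_pos := fun i h1 h2 => by
    show 1 ≤ (if 1 ≤ i ∧ i ≤ ℓ then ℓ else 0)
    rw [if_pos ⟨h1, h2⟩]; exact hℓ
  shape_mono := fun i j h1 h2 h3 => by
    show (if 1 ≤ i ∧ i ≤ ℓ then ℓ else 0) ≤ (if 1 ≤ j ∧ j ≤ ℓ then ℓ else 0)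
    rw [if_pos ⟨h1, le_trans h2 h3⟩, if_pos ⟨le_trans h1 h2, h3⟩]
  shape_eq_zero := fun i hi => by
    rw [Set.mem_Icc] at hi
    show (if 1 ≤ i ∧ i ≤ ℓ then ℓ else 0) = 0
    exact if_neg hi
  dots_mem := fun p hp => by
    obtain ⟨h1, h2, h3, h4⟩ := hD p hp
    refine ⟨h1, h2, h3, ?_⟩
    show p.2 ≤ (if 1 ≤ p.1 ∧ p.1 ≤ ℓ then ℓ else 0)
    rw [if_pos ⟨h1, h2⟩]; exact h4

def mkStair (ℓ : ℕ) (hℓ : 1 ≤ ℓ) (D : Set (ℕ × ℕ))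
    (hD : ∀ p ∈ D, 1 ≤ p.1 ∧ p.1 ≤ ℓ ∧ 1 ≤ p.2 ∧ p.2 ≤ p.1) : Filling where
  len := ℓ
  shape := fun i => if 1 ≤ i ∧ i ≤ ℓ then i else 0
  dots := D
  len_pos := hℓ
  shape_pos := fun i h1 h2 => by
    show 1 ≤ (if 1 ≤ i ∧ i ≤ ℓ then i else 0)
    rw [if_pos ⟨h1, h2⟩]; exact h1
  shape_mono := fun i j h1 h2 h3 => by
    show (if 1 ≤ i ∧ i ≤ ℓ then i else 0) ≤ (if 1 ≤ j ∧ j ≤ ℓ then j else 0)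
    rw [if_pos ⟨h1, le_trans h2 h3⟩, if_pos ⟨le_trans h1 h2, h3⟩]; exact h2
  shape_eq_zero := fun i hi => by
    rw [Set.mem_Icc] at hi
    show (if 1 ≤ i ∧ i ≤ ℓ then i else 0) = 0
    exact if_neg hi
  dots_mem := fun p hp => by
    obtain ⟨h1, h2, h3, h4⟩ := hD p hp
    refine ⟨h1, h2, h3, ?_⟩
    show p.2 ≤ (if 1 ≤ p.1 ∧ p.1 ≤ ℓ then p.1 else 0)
    rw [if_pos ⟨h1, h2⟩]; exact h4

lemma Filling_ext {T T' : Filling} (h1 : T.len = T'.len) (h2 : T.shape = T'.shape)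
    (h3 : T.dots = T'.dots) : T = T' := by
  cases T
  cases T'
  dsimp only at h1 h2 h3
  subst h1; subst h2; subst h3
  rfl

noncomputable def gFill (T : Filling) (hpos : T.ColumnPositive) (hst : T.Staircase) : Filling :=
  mkSquare T.len T.len_pos (gD T.len (colS T)) (gD_subset (good_of hpos hst))

lemma gFill_enriched (T : Filling) (hpos : T.ColumnPositive) (hst : T.Staircase) :
    (gFill T hpos hst).Enriched := by
  have hS := good_of hpos hst
  have hE := gD_enr hS
  refine ⟨?_, hE.2.1, hE.2.2.1, hE.2.2.2⟩
  intro i h1 h2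
  show (if 1 ≤ i ∧ i ≤ T.len then T.len else 0) = T.len
  exact if_pos ⟨h1, h2⟩

noncomputable def gmap (T : {T : Filling // T.ColumnPositive ∧ T.Staircase}) :
    {R : Filling // R.Enriched} :=
  ⟨gFill T.1 T.2.1 T.2.2, gFill_enriched T.1 T.2.1 T.2.2⟩

lemma gmap_inj : Function.Injective gmap := by
  rintro ⟨T, hT⟩ ⟨T', hT'⟩ h
  have h0 : gFill T hT.1 hT.2 = gFill T' hT'.1 hT'.2 := congrArg Subtype.val h
  have hlen0 := congrArg Filling.len h0
  have hlen : T.len = T'.len := hlen0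
  have hdots1 := congrArg Filling.dots h0
  have hdots0 : gD T.len (colS T) = gD T'.len (colS T') := hdots1
  rw [← hlen] at hdots0
  have hgood' : GoodData T.len (colS T') := by rw [hlen]; exact good_of hT'.1 hT'.2
  have hcol := gD_inj (good_of hT.1 hT.2) hgood' hdots0
  apply Subtype.ext
  apply Filling_ext hlen
  · funext i
    by_cases hi : 1 ≤ i ∧ i ≤ T.len
    · rw [hT.2 i hi.1 hi.2, hT'.2 i hi.1 (by omega)]
    · rw [T.shape_eq_zero i (by rw [Set.mem_Icc]; exact hi),
        T'.shape_eq_zero i (by rw [Set.mem_Icc]; rw [← hlen]; exact hi)]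
  · rw [dots_eq_stD T, dots_eq_stD T', ← hlen]
    ext p
    constructor
    · rintro ⟨a, b, c⟩
      exact ⟨a, b, by rw [← hcol p.1 a b]; exact c⟩
    · rintro ⟨a, b, c⟩
      exact ⟨a, b, by rw [hcol p.1 a b]; exact c⟩

lemma gmap_surj : Function.Surjective gmap := by
  rintro ⟨R, hR⟩
  obtain ⟨hsq, hcols, hrows, hiff⟩ := hR
  have hE : EnrD R.len R.dots := by
    refine ⟨?_, hcols, hrows, hiff⟩
    intro p hp
    obtain ⟨h1, h2, h3, h4⟩ := R.dots_mem p hp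
    rw [hsq p.1 h1 h2] at h4
    exact ⟨h1, h2, h3, h4⟩
  obtain ⟨S, hS, hgS⟩ := gD_surj R.len R.dots hE
  have hstd := stD_subset hS
  have hTpos : (mkStair R.len R.len_pos (stD R.len S) hstd).ColumnPositive := by
    intro i h1 h2
    obtain ⟨⟨j, hj⟩, -⟩ := hS i h1 h2
    exact ⟨j, ⟨h1, h2, hj⟩⟩
  have hTst : (mkStair R.len R.len_pos (stD R.len S) hstd).Staircase := by
    intro i h1 h2
    show (if 1 ≤ i ∧ i ≤ R.len then i else 0) = i
    exact if_pos ⟨h1, h2⟩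
  refine ⟨⟨mkStair R.len R.len_pos (stD R.len S) hstd, hTpos, hTst⟩, ?_⟩
  · apply Subtype.ext
    show gFill (mkStair R.len R.len_pos (stD R.len S) hstd) hTpos hTst = R
    refine Filling_ext rfl ?_ ?_
    · funext i
      by_cases hi : 1 ≤ i ∧ i ≤ R.len
      · show (if 1 ≤ i ∧ i ≤ R.len then R.len else 0) = R.shape i
        rw [if_pos hi, hsq i hi.1 hi.2]
      · show (if 1 ≤ i ∧ i ≤ R.len then R.len else 0) = R.shape i
        rw [if_neg hi, R.shape_eq_zero i (by rw [Set.mem_Icc]; exact hi)]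
    · show gD R.len (colS (mkStair R.len R.len_pos (stD R.len S) hstd)) = R.dots
      rw [← hgS]
      apply gD_congr
      intro i h1 h2
      ext j
      show ((i, j) ∈ stD R.len S) ↔ j ∈ S i
      constructor
      · rintro ⟨a, b, c⟩; exact c
      · intro hj; exact ⟨h1, h2, hj⟩

lemma gmap_dsum (T T' Ssum : {T : Filling // T.ColumnPositive ∧ T.Staircase})
    (h : Filling.IsDsum T.1 T'.1 Ssum.1) :
    Filling.IsBoxSum (gmap T).1 (gmap T').1 (gmap Ssum).1 := by
  obtain ⟨hlen, hsh1, hsh2, hdots⟩ := h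
  have hTa : T.1.shape T.1.len = T.1.len := T.2.2 _ T.1.len_pos le_rfl
  have hdots' : Ssum.1.dots = T.1.dots ∪ trD T.1.len T'.1.dots := by
    rw [hdots, hTa]
    rfl
  have hcols1 : ∀ i, 1 ≤ i → i ≤ T.1.len → colS Ssum.1 i = colS T.1 i := by
    intro i h1 h2
    ext j
    show (i, j) ∈ Ssum.1.dots ↔ (i, j) ∈ T.1.dots
    rw [hdots']
    constructor
    · rintro (hp | hp)
      · exact hp
      · obtain ⟨q, hq, f1, f2⟩ := mem_trD.1 hp
        have hb : 1 ≤ q.1 := (T'.1.dots_mem q hq).1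
        have f1' : i = q.1 + T.1.len := f1
        omega
    · intro hp; exact Or.inl hp
  have hcols2 : ∀ i, 1 ≤ i → i ≤ T'.1.len →
      colS Ssum.1 (T.1.len + i) = (fun j => j + T.1.len) '' colS T'.1 i := by
    intro i h1 h2
    ext j
    show (T.1.len + i, j) ∈ Ssum.1.dots ↔ _
    rw [hdots']
    constructor
    · rintro (hp | hp)
      · have h5 : T.1.len + i ≤ T.1.len := (T.1.dots_mem _ hp).2.1
        omega
      · obtain ⟨q, hq, f1, f2⟩ := mem_trD.1 hp
        have f1' : T.1.len + i = q.1 + T.1.len := f1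
        have f2' : j = q.2 + T.1.len := f2
        refine ⟨q.2, ?_, by show q.2 + T.1.len = j; omega⟩
        show (i, q.2) ∈ T'.1.dots
        have hq' : (i, q.2) = q := Prod.ext (by show i = q.1; omega) rfl
        rw [hq']; exact hq
    · rintro ⟨j0, hj0, f⟩
      have f' : j0 + T.1.len = j := f
      right
      apply mem_trD.2
      refine ⟨(i, j0), hj0, by show T.1.len + i = i + T.1.len; omega,
        by show j = j0 + T.1.len; omega⟩
  have hgoodT := good_of T.2.1 T.2.2
  have hgoodT' := good_of T'.2.1 T'.2.2
  have hkey : gD Ssum.1.len (colS Ssum.1)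
      = gD T.1.len (colS T.1) ∪ trD T.1.len (gD T'.1.len (colS T'.1)) := by
    rw [hlen]
    exact gD_dsum hgoodT T'.1.len (colS T'.1) hgoodT' hcols1 hcols2
  refine ⟨hlen, ?_, ?_⟩
  · intro i h1 h2
    show (if 1 ≤ i ∧ i ≤ Ssum.1.len then Ssum.1.len else 0) = Ssum.1.len
    exact if_pos ⟨h1, h2⟩
  · exact hkey

lemma gmap_stats (T : {T : Filling // T.ColumnPositive ∧ T.Staircase}) :
    T.1.len = (gmap T).1.len ∧
    T.1.nDots = (gmap T).1.nDots ∧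
    T.1.comp = (gmap T).1.boxcomp ∧
    T.1.MinSet.ncard = (gmap T).1.lminDots ∧
    T.1.rmaxDots = (gmap T).1.rmaxDots := by
  obtain ⟨hpos, hst⟩ := T.2
  have hgood : GoodData T.1.len (colS T.1) := good_of hpos hst
  have hbnd := gD_subset hgood
  refine ⟨rfl, ?_, ?_, ?_, ?_⟩
  · -- nDots
    show T.1.dots.ncard = (gD T.1.len (colS T.1)).ncard
    rw [gD_ncard hgood, ← dots_eq_stD]
  · -- comp = boxcomp
    show Set.ncard {k | 1 ≤ k ∧ k ≤ T.1.len ∧ (k = T.1.len ∨ T.1.shape k < T.1.shape (k+1)) ∧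
        ∀ p ∈ T.1.dots, k < p.1 → T.1.shape k < p.2}
      = Set.ncard {k | 1 ≤ k ∧ k ≤ T.1.len ∧ ∀ p ∈ gD T.1.len (colS T.1),
        (p.1 ≤ k ∧ p.2 ≤ k) ∨ (k < p.1 ∧ k < p.2)}
    congr 1
    ext k
    constructor
    · rintro ⟨a, b, c, d⟩
      refine ⟨a, b, ?_⟩
      apply (gD_comp hgood k).1
      intro p hp hlt
      have h5 := d p (by rw [dots_eq_stD]; exact hp) hlt
      rwa [hst k a b] at h5
    · rintro ⟨a, b, c⟩
      refine ⟨a, b, ?_, ?_⟩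
      · by_cases hk : k = T.1.len
        · exact Or.inl hk
        · right
          rw [hst k a b, hst (k+1) (by omega) (by omega)]
          omega
      · intro p hp hlt
        rw [hst k a b]
        exact (gD_comp hgood k).2 c p (by rw [← dots_eq_stD]; exact hp) hlt
  · -- Min = lmin
    show Set.ncard {i | 1 ≤ i ∧ i ≤ T.1.len ∧ (i, 1) ∈ T.1.dots}
      = (lminS (gD T.1.len (colS T.1))).ncard
    rw [gD_lmin hgood]
    rfl
  · -- rmax
    have hlpos : 1 ≤ T.1.len := T.1.len_pos
    show Set.ncard {p | p ∈ T.1.dots ∧ ∀ q ∈ T.1.dots, p.1 < q.1 →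
        T.1.shape p.1 - p.2 < T.1.shape q.1 - q.2}
      = Set.ncard {p | p ∈ gD T.1.len (colS T.1) ∧ ∀ q ∈ gD T.1.len (colS T.1), p.1 < q.1 →
        (if 1 ≤ p.1 ∧ p.1 ≤ T.1.len then T.1.len else 0) - p.2
          < (if 1 ≤ q.1 ∧ q.1 ≤ T.1.len then T.1.len else 0) - q.2}
    have he1 : {p | p ∈ T.1.dots ∧ ∀ q ∈ T.1.dots, p.1 < q.1 →
        T.1.shape p.1 - p.2 < T.1.shape q.1 - q.2}
        = {p ∈ rmaxSt (stD T.1.len (colS T.1)) | p.1 - p.2 < T.1.len} := by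
      ext p
      constructor
      · rintro ⟨hp, hmax⟩
        obtain ⟨b1, b2, b3, b4⟩ := T.1.dots_mem p hp
        have hp' : p ∈ stD T.1.len (colS T.1) := by rw [← dots_eq_stD]; exact hp
        refine ⟨⟨hp', ?_⟩, by omega⟩
        intro q hq hlt
        have hq' : q ∈ T.1.dots := by rw [dots_eq_stD]; exact hq
        obtain ⟨c1, c2, c3, c4⟩ := T.1.dots_mem q hq'
        have h5 := hmax q hq' hlt
        rwa [hst p.1 b1 b2, hst q.1 c1 c2] at h5
      · rintro ⟨⟨hp, hmax⟩, hflt⟩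
        obtain ⟨b1, b2, b3, b4⟩ := stD_subset hgood p hp
        refine ⟨by rw [dots_eq_stD]; exact hp, ?_⟩
        intro q hq hlt
        have hq' : q ∈ stD T.1.len (colS T.1) := by rw [← dots_eq_stD]; exact hq
        obtain ⟨c1, c2, c3, c4⟩ := stD_subset hgood q hq'
        rw [hst p.1 b1 b2, hst q.1 c1 c2]
        exact hmax q hq' hlt
    have he2 : {p | p ∈ gD T.1.len (colS T.1) ∧ ∀ q ∈ gD T.1.len (colS T.1), p.1 < q.1 →
        (if 1 ≤ p.1 ∧ p.1 ≤ T.1.len then T.1.len else 0) - p.2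
          < (if 1 ≤ q.1 ∧ q.1 ≤ T.1.len then T.1.len else 0) - q.2}
        = {p ∈ rmaxSq (gD T.1.len (colS T.1)) | T.1.len < p.2 + T.1.len} := by
      ext p
      constructor
      · rintro ⟨hp, hmax⟩
        obtain ⟨b1, b2, b3, b4⟩ := hbnd p hp
        refine ⟨⟨hp, ?_⟩, by omega⟩
        intro q hq hlt
        obtain ⟨c1, c2, c3, c4⟩ := hbnd q hq
        have h5 := hmax q hq hlt
        rw [if_pos ⟨b1, b2⟩, if_pos ⟨c1, c2⟩] at h5
        omega
      · rintro ⟨⟨hp, hmax⟩, -⟩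
        obtain ⟨b1, b2, b3, b4⟩ := hbnd p hp
        refine ⟨hp, ?_⟩
        intro q hq hlt
        obtain ⟨c1, c2, c3, c4⟩ := hbnd q hq
        have h5 := hmax q hq hlt
        rw [if_pos ⟨b1, b2⟩, if_pos ⟨c1, c2⟩]
        omega
    rw [he1, he2, gD_rmax hgood T.1.len]

end StairEnr

/-- There is a bijection `g` from column-positive staircase fillings
to enriched permutation fillings turning direct sums into boxed sums and preserving
the listed statistics. -/
theorem colpos_staircase_equiv_enriched :
    ∃ g : {T : Filling // T.ColumnPositive ∧ T.Staircase} → {R : Filling // R.Enriched},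
      Function.Bijective g ∧
      (∀ T T' S : {T : Filling // T.ColumnPositive ∧ T.Staircase},
        Filling.IsDsum T.1 T'.1 S.1 → Filling.IsBoxSum (g T).1 (g T').1 (g S).1) ∧
      ∀ T : {T : Filling // T.ColumnPositive ∧ T.Staircase},
        T.1.len = (g T).1.len ∧
        T.1.nDots = (g T).1.nDots ∧
        T.1.comp = (g T).1.boxcomp ∧
        T.1.MinSet.ncard = (g T).1.lminDots ∧
        T.1.rmaxDots = (g T).1.rmaxDots := by
  exact ⟨StairEnr.gmap, ⟨StairEnr.gmap_inj, StairEnr.gmap_surj⟩, StairEnr.gmap_dsum,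
    StairEnr.gmap_stats⟩
end

section
/- For every matching M with no left nesting, lcr(M) = rne(M) + rcr(M); consequently also lcr'(M) = rne(M) + rcr'(M), where lcr'(M) = #(Lcr(M) ∖ {i−1 : i ∈ LRcr(M)}) and rcr'(M) = rcr(M) − lrcr(M). -/
/-! ## Auxiliary material for statement 16 -/

namespace Matching

variable {n : ℕ} (M : Matching n)

/-- `m` is the opener of some arc. -/
def isOp (m : ℕ) : Prop := ∃ i, 1 ≤ i ∧ i ≤ n ∧ M.opener i = m

/-- `m` is the closer of some arc. -/
def isCl (m : ℕ) : Prop := ∃ i, 1 ≤ i ∧ i ≤ n ∧ M.closer i = m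

lemma closer_injOn' {i j : ℕ} (hi : 1 ≤ i) (hin : i ≤ n) (hj : 1 ≤ j) (hjn : j ≤ n)
    (hc : M.closer i = M.closer j) : i = j := by
  rcases lt_trichotomy i j with hlt | he | hlt
  · exact absurd hc (ne_of_lt (M.closer_mono i j hi hlt hjn))
  · exact he
  · exact absurd hc.symm (ne_of_lt (M.closer_mono j i hj hlt hin))

lemma isCl_not_isOp {m : ℕ} (hm : M.isCl m) : ¬ M.isOp m := by
  rintro ⟨i, hi, hin, rfl⟩
  obtain ⟨j, hj, hjn, hc⟩ := hm
  exact M.opener_ne_closer i j hi hin hj hjn hc.symm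

lemma isOp_or_isCl {m : ℕ} (h1 : 1 ≤ m) (h2 : m ≤ 2 * n) : M.isOp m ∨ M.isCl m := by
  obtain ⟨i, hi, hin, ho | hc⟩ := M.cover m ⟨h1, h2⟩
  · exact Or.inl ⟨i, hi, hin, ho⟩
  · exact Or.inr ⟨i, hi, hin, hc⟩

lemma isCl_iff_not_isOp {m : ℕ} (h1 : 1 ≤ m) (h2 : m ≤ 2 * n) : M.isCl m ↔ ¬ M.isOp m :=
  ⟨M.isCl_not_isOp, fun h => (M.isOp_or_isCl h1 h2).resolve_left h⟩

lemma not_isOp_last : ¬ M.isOp (2 * n) := by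
  rintro ⟨i, hi, hin, ho⟩
  have h1 := M.opener_lt_closer i hi hin
  have h2 := (M.closer_mem i hi hin).2
  omega

lemma isOp_one (hn : 1 ≤ n) : M.isOp 1 := by
  rcases M.isOp_or_isCl (m := 1) le_rfl (by omega) with h | h
  · exact h
  · obtain ⟨i, hi, hin, hc⟩ := h
    have h1 := M.opener_lt_closer i hi hin
    have h2 := (M.opener_mem i hi hin).1
    omega

/-- Adjacent opener-opener pairs. -/
def OOs : Set ℕ := {m | 1 ≤ m ∧ m + 1 ≤ 2 * n ∧ M.isOp m ∧ M.isOp (m + 1)}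

/-- Adjacent closer-closer pairs. -/
def CCs : Set ℕ := {m | 1 ≤ m ∧ m + 1 ≤ 2 * n ∧ M.isCl m ∧ M.isCl (m + 1)}

open Classical in
lemma card_filter_isOp : ((Finset.Icc 1 (2 * n)).filter fun m => M.isOp m).card = n := by
  classical
  have hb : (Finset.Icc 1 n).card
      = ((Finset.Icc 1 (2 * n)).filter fun m => M.isOp m).card := by
    apply Finset.card_bij (fun a _ => M.opener a)
    · intro a ha
      simp only [Finset.mem_Icc] at ha
      have hm := M.opener_mem a ha.1 ha.2
      simp only [Set.mem_Icc] at hm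
      simp only [Finset.mem_filter, Finset.mem_Icc]
      exact ⟨⟨hm.1, hm.2⟩, a, ha.1, ha.2, rfl⟩
    · intro a ha b hb he
      simp only [Finset.mem_Icc] at ha hb
      exact M.opener_inj a b ha.1 ha.2 hb.1 hb.2 he
    · intro b hb
      simp only [Finset.mem_filter, Finset.mem_Icc] at hb
      obtain ⟨_, i, hi, hin, ho⟩ := hb
      exact ⟨i, by simp only [Finset.mem_Icc]; omega, ho⟩
  rw [← hb, Nat.card_Icc]
  omega

open Classical in
lemma ncard_OOs_eq_ncard_CCs : (OOs M).ncard = (CCs M).ncard := by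
  classical
  rcases Nat.eq_zero_or_pos n with rfl | hn
  · have e1 : OOs M = ∅ := by
      ext m
      simp only [OOs, Set.mem_setOf_eq, Set.mem_empty_iff_false, iff_false]
      rintro ⟨_, h2, _⟩; omega
    have e2 : CCs M = ∅ := by
      ext m
      simp only [CCs, Set.mem_setOf_eq, Set.mem_empty_iff_false, iff_false]
      rintro ⟨_, h2, _⟩; omega
    rw [e1, e2]
  · have key : ∀ P : ℕ → Prop, {m | 1 ≤ m ∧ m + 1 ≤ 2 * n ∧ P m ∧ P (m + 1)}
        = ↑((Finset.Icc 1 (2 * n - 1)).filter fun m => P m ∧ P (m + 1)) := by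
      intro P; ext m
      simp only [Set.mem_setOf_eq, Finset.coe_filter, Finset.mem_Icc]
      constructor
      · rintro ⟨h1, h2, h3, h4⟩; exact ⟨⟨h1, by omega⟩, h3, h4⟩
      · rintro ⟨⟨h1, h2⟩, h3, h4⟩; exact ⟨h1, by omega, h3, h4⟩
    have hOO : OOs M = ↑((Finset.Icc 1 (2 * n - 1)).filter fun m => M.isOp m ∧ M.isOp (m + 1)) :=
      key _
    have hCC : CCs M = ↑((Finset.Icc 1 (2 * n - 1)).filter fun m => M.isCl m ∧ M.isCl (m + 1)) :=
      key _
    rw [hOO, hCC, Set.ncard_coe_finset, Set.ncard_coe_finset]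
    have hfc : (Finset.Icc 1 (2 * n - 1)).filter (fun m => M.isCl m ∧ M.isCl (m + 1))
        = (Finset.Icc 1 (2 * n - 1)).filter fun m => ¬ M.isOp m ∧ ¬ M.isOp (m + 1) := by
      apply Finset.filter_congr
      intro m hm
      simp only [Finset.mem_Icc] at hm
      rw [M.isCl_iff_not_isOp hm.1 (by omega), M.isCl_iff_not_isOp (by omega) (by omega)]
    rw [hfc]
    set s := Finset.Icc 1 (2 * n - 1) with hs
    have hsum1 : ∑ m ∈ Finset.Icc 1 (2 * n), (if M.isOp m then (1 : ℤ) else 0) = n := by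
      rw [Finset.sum_boole]
      exact_mod_cast M.card_filter_isOp
    have hinsN : Finset.Icc 1 (2 * n) = insert (2 * n) s := by
      ext m; simp only [hs, Finset.mem_Icc, Finset.mem_insert]; omega
    have hins1 : Finset.Icc 1 (2 * n) = insert 1 (Finset.Icc 2 (2 * n)) := by
      ext m; simp only [Finset.mem_Icc, Finset.mem_insert]; omega
    have hNnot : (2 * n) ∉ s := by
      simp only [hs, Finset.mem_Icc]; omega
    have h1not : (1 : ℕ) ∉ Finset.Icc 2 (2 * n) := by
      simp only [Finset.mem_Icc]; omega
    have hchiN : (if M.isOp (2 * n) then (1 : ℤ) else 0) = 0 := if_neg M.not_isOp_last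
    have hchi1 : (if M.isOp 1 then (1 : ℤ) else 0) = 1 := if_pos (M.isOp_one hn)
    have hsumS : ∑ m ∈ s, (if M.isOp m then (1 : ℤ) else 0) = n := by
      have h := hsum1
      rw [hinsN, Finset.sum_insert hNnot, hchiN] at h
      linarith
    have hsumS' : ∑ m ∈ s, (if M.isOp (m + 1) then (1 : ℤ) else 0) = (n : ℤ) - 1 := by
      have hshift : ∑ m ∈ s, (if M.isOp (m + 1) then (1 : ℤ) else 0)
          = ∑ m ∈ Finset.Icc 2 (2 * n), (if M.isOp m then (1 : ℤ) else 0) := by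
        apply Finset.sum_nbij' (fun m => m + 1) (fun m => m - 1)
        · intro a ha; simp only [hs, Finset.mem_Icc] at ha ⊢; omega
        · intro a ha; simp only [hs, Finset.mem_Icc] at ha ⊢; omega
        · intro a _; omega
        · intro a ha; simp only [Finset.mem_Icc] at ha; omega
        · intro a _; rfl
      rw [hshift]
      have h := hsum1
      rw [hins1, Finset.sum_insert h1not, hchi1] at h
      linarith
    have hcard_s : (s.card : ℤ) = 2 * (n : ℤ) - 1 := by
      rw [hs, Nat.card_Icc]; omega
    have hfinal : ∑ m ∈ s, (if M.isOp m ∧ M.isOp (m + 1) then (1 : ℤ) else 0)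
        = ∑ m ∈ s, (if ¬ M.isOp m ∧ ¬ M.isOp (m + 1) then (1 : ℤ) else 0) := by
      have expand : ∀ m, (if M.isOp m ∧ M.isOp (m + 1) then (1 : ℤ) else 0)
          = (if ¬ M.isOp m ∧ ¬ M.isOp (m + 1) then (1 : ℤ) else 0)
            + (if M.isOp m then 1 else 0) + (if M.isOp (m + 1) then 1 else 0) - 1 := by
        intro m
        by_cases p : M.isOp m <;> by_cases q : M.isOp (m + 1) <;> simp [p, q]
      rw [Finset.sum_congr rfl fun m _ => expand m, Finset.sum_sub_distrib,
        Finset.sum_add_distrib, Finset.sum_add_distrib, hsumS, hsumS', Finset.sum_const,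
        nsmul_eq_mul, mul_one, hcard_s]
      ring
    have hcast : ((s.filter fun m => M.isOp m ∧ M.isOp (m + 1)).card : ℤ)
        = ((s.filter fun m => ¬ M.isOp m ∧ ¬ M.isOp (m + 1)).card : ℤ) := by
      rw [← Finset.sum_boole, ← Finset.sum_boole]
      exact hfinal
    exact_mod_cast hcast

lemma image_opener_Lcr (h : M.NoLeftNesting) : M.opener '' M.LcrSet = OOs M := by
  ext m
  simp only [OOs, LcrSet, isOp, Set.mem_image, Set.mem_setOf_eq]
  constructor
  · rintro ⟨i, ⟨hi, hin, j, hj, hjn, hoj, hlt, hcc⟩, rfl⟩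
    have h1 := (M.opener_mem i hi hin).1
    have hj2 := (M.opener_mem j hj hjn).2
    exact ⟨h1, by omega, ⟨i, hi, hin, rfl⟩, ⟨j, hj, hjn, hoj⟩⟩
  · rintro ⟨h1, h2, ⟨i, hi, hin, rfl⟩, ⟨j, hj, hjn, hoj⟩⟩
    have hlt := M.opener_lt_closer i hi hin
    have hne := M.opener_ne_closer j i hj hjn hi hin
    have hcne : M.closer i ≠ M.closer j := by
      intro he
      have hij := M.closer_injOn' hi hin hj hjn he
      subst hij
      omega
    have hnl := h j i hj hjn hi hin
    refine ⟨i, ⟨hi, hin, j, hj, hjn, hoj, by omega, by omega⟩, rfl⟩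

lemma injOn_opener_Lcr : Set.InjOn M.opener M.LcrSet := by
  rintro a ⟨ha1, ha2, _⟩ b ⟨hb1, hb2, _⟩ he
  exact M.opener_inj a b ha1 ha2 hb1 hb2 he

lemma image_closer_Radj : (fun i => M.closer (i - 1)) '' M.RadjSet = CCs M := by
  ext m
  simp only [CCs, RadjSet, isCl, Set.mem_image, Set.mem_setOf_eq]
  constructor
  · rintro ⟨i, ⟨h2, hin, hcl⟩, rfl⟩
    have hm1 := (M.closer_mem (i - 1) (by omega) (by omega)).1
    have hm2 := (M.closer_mem i (by omega) hin).2
    exact ⟨hm1, by omega, ⟨i - 1, by omega, by omega, rfl⟩, ⟨i, by omega, hin, by omega⟩⟩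
  · rintro ⟨h1, h2, ⟨a, ha, han, hca⟩, ⟨b, hb, hbn, hcb⟩⟩
    have hab : a < b := by
      have hne : a ≠ b := by intro he; subst he; omega
      rcases lt_or_gt_of_ne hne with h' | h'
      · exact h'
      · have := M.closer_mono b a hb h' han
        omega
    have hb1 : b = a + 1 := by
      by_contra hne
      have h1' : a + 1 < b := by omega
      have c1 := M.closer_mono a (a + 1) ha (by omega) (by omega)
      have c2 := M.closer_mono (a + 1) b (by omega) h1' hbn
      omega
    have hba : b - 1 = a := by omega
    refine ⟨b, ⟨by omega, hbn, ?_⟩, ?_⟩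
    · rw [hba]; omega
    · show M.closer (b - 1) = m
      rw [hba]; exact hca

lemma injOn_closer_Radj : Set.InjOn (fun i => M.closer (i - 1)) M.RadjSet := by
  rintro a ⟨ha1, ha2, _⟩ b ⟨hb1, hb2, _⟩ he
  simp only at he
  have := M.closer_injOn' (i := a - 1) (j := b - 1) (by omega) (by omega) (by omega) (by omega) he
  omega

lemma radj_eq_union : M.RadjSet = M.RneSet ∪ M.RcrSet := by
  ext i
  simp only [RadjSet, RneSet, RcrSet, Set.mem_union, Set.mem_setOf_eq]
  constructor
  · rintro ⟨h2, hn', hcl⟩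
    have hone : M.opener i ≠ M.opener (i - 1) := by
      intro he
      have := M.opener_inj i (i - 1) (by omega) hn' (by omega) (by omega) he
      omega
    rcases lt_or_gt_of_ne hone with hlt | hgt
    · exact Or.inl ⟨h2, hn', hlt, hcl⟩
    · refine Or.inr ⟨h2, hn', hgt, ?_, hcl⟩
      have hl := M.opener_lt_closer i (by omega) hn'
      have hne := M.opener_ne_closer i (i - 1) (by omega) hn' (by omega) (by omega)
      omega
  · rintro (⟨h2, hn', _, hcl⟩ | ⟨h2, hn', _, _, hcl⟩) <;> exact ⟨h2, hn', hcl⟩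

lemma disjoint_rne_rcr : Disjoint M.RneSet M.RcrSet := by
  rw [Set.disjoint_left]
  rintro i ⟨_, _, h1, _⟩ ⟨_, _, h2, _⟩
  omega

end Matching
/-- In a matching without left nestings,
`lcr = rne + rcr` and `lcr' = rne + rcr'`. -/
theorem lcr_eq_rne_add_rcr (n : ℕ) (M : Matching n) (h : M.NoLeftNesting) :
    M.LcrSet.ncard = M.RneSet.ncard + M.RcrSet.ncard ∧
    (M.LcrSet \ (fun i => i - 1) '' M.LRcrSet).ncard =
      M.RneSet.ncard + (M.RcrSet.ncard - M.LRcrSet.ncard) := by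
  classical
  have hLfin : M.LcrSet.Finite :=
    (Set.finite_Icc 1 n).subset fun i hi => Set.mem_Icc.2 ⟨hi.1, hi.2.1⟩
  have hRneFin : M.RneSet.Finite :=
    (Set.finite_Icc 1 n).subset fun i hi => Set.mem_Icc.2 ⟨one_le_two.trans hi.1, hi.2.1⟩
  have hRcrFin : M.RcrSet.Finite :=
    (Set.finite_Icc 1 n).subset fun i hi => Set.mem_Icc.2 ⟨one_le_two.trans hi.1, hi.2.1⟩
  have hmain : M.LcrSet.ncard = M.RneSet.ncard + M.RcrSet.ncard := by
    have h1 : M.LcrSet.ncard = (Matching.OOs M).ncard := by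
      rw [← M.image_opener_Lcr h, Set.ncard_image_of_injOn M.injOn_opener_Lcr]
    have h2 : M.RadjSet.ncard = (Matching.CCs M).ncard := by
      rw [← M.image_closer_Radj, Set.ncard_image_of_injOn M.injOn_closer_Radj]
    have h3 := M.ncard_OOs_eq_ncard_CCs
    have h4 : M.RadjSet.ncard = M.RneSet.ncard + M.RcrSet.ncard := by
      rw [M.radj_eq_union, Set.ncard_union_eq M.disjoint_rne_rcr hRneFin hRcrFin]
    omega
  refine ⟨hmain, ?_⟩
  have hsub : (fun i => i - 1) '' M.LRcrSet ⊆ M.LcrSet := by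
    rintro _ ⟨i, ⟨⟨h2, hn', ho1, ho2, hcl⟩, hop⟩, rfl⟩
    show i - 1 ∈ M.LcrSet
    exact ⟨by omega, by omega, i, by omega, hn', hop, ho2, by omega⟩
  have hinj3 : Set.InjOn (fun i => i - 1) M.LRcrSet := by
    rintro a ⟨⟨h2a, _⟩, _⟩ b ⟨⟨h2b, _⟩, _⟩ he
    simp only at he
    omega
  have him : ((fun i => i - 1) '' M.LRcrSet).ncard = M.LRcrSet.ncard :=
    Set.ncard_image_of_injOn hinj3
  have hdiff := Set.ncard_diff hsub (hLfin.subset hsub)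
  have hle : M.LRcrSet.ncard ≤ M.RcrSet.ncard :=
    Set.ncard_le_ncard (fun i hi => hi.1) hRcrFin
  omega
end

section
/- For every matching M of size n, the number of unordered pairs of arcs whose openers differ by 1 equals the number of unordered pairs of arcs whose closers differ by 1 (that is, ladj(M) = radj(M)). -/
/-- In any matching, the number of (unordered) pairs of arcs
whose openers differ by 1 equals the number of pairs of arcs whose closers
differ by 1 (`ladj(M) = radj(M)`); each unordered pair is recorded by the
ordered pair in the `+1` direction. -/
theorem ladj_eq_radj (n : ℕ) (M : Matching n) :
    Set.ncard {p : ℕ × ℕ | 1 ≤ p.1 ∧ p.1 ≤ n ∧ 1 ≤ p.2 ∧ p.2 ≤ n ∧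
        M.opener p.2 = M.opener p.1 + 1} =
      Set.ncard {p : ℕ × ℕ | 1 ≤ p.1 ∧ p.1 ≤ n ∧ 1 ≤ p.2 ∧ p.2 ≤ n ∧
        M.closer p.2 = M.closer p.1 + 1} := by
    classical
  set I : Finset ℕ := Finset.Icc 1 n with hI
  set O : Finset ℕ := I.image M.opener with hO
  set C : Finset ℕ := I.image M.closer with hC
  have hOinj : Set.InjOn M.opener ↑I := by
    intro a ha b hb hab
    simp only [hI, Finset.coe_Icc, Set.mem_Icc] at ha hb
    exact M.opener_inj a b ha.1 ha.2 hb.1 hb.2 hab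
  have hCinj : Set.InjOn M.closer ↑I := by
    intro a ha b hb hab
    simp only [hI, Finset.coe_Icc, Set.mem_Icc] at ha hb
    by_contra hne
    rcases lt_or_gt_of_ne hne with h | h
    · exact absurd hab (ne_of_lt (M.closer_mono a b ha.1 h hb.2))
    · exact absurd hab.symm (ne_of_lt (M.closer_mono b a hb.1 h ha.2))
  have hOcard : O.card = n := by
    rw [hO, Finset.card_image_of_injOn hOinj]
    simp [hI]
  have hCcard : C.card = n := by
    rw [hC, Finset.card_image_of_injOn hCinj]
    simp [hI]
  have hdisj : ∀ m, m ∈ O → m ∈ C → False := by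
    intro m hmO hmC
    simp only [hO, hC, hI, Finset.mem_image, Finset.mem_Icc] at hmO hmC
    obtain ⟨i, ⟨hi1, hi2⟩, hio⟩ := hmO
    obtain ⟨j, ⟨hj1, hj2⟩, hjc⟩ := hmC
    exact M.opener_ne_closer i j hi1 hi2 hj1 hj2 (hio.trans hjc.symm)
  have hOsub : ∀ m ∈ O, 1 ≤ m ∧ m ≤ 2 * n := by
    intro m hm
    simp only [hO, hI, Finset.mem_image, Finset.mem_Icc] at hm
    obtain ⟨i, ⟨hi1, hi2⟩, hio⟩ := hm
    have := M.opener_mem i hi1 hi2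
    simp only [Set.mem_Icc] at this
    omega
  have hCsub : ∀ m ∈ C, 1 ≤ m ∧ m ≤ 2 * n := by
    intro m hm
    simp only [hC, hI, Finset.mem_image, Finset.mem_Icc] at hm
    obtain ⟨i, ⟨hi1, hi2⟩, hio⟩ := hm
    have := M.closer_mem i hi1 hi2
    simp only [Set.mem_Icc] at this
    omega
  have hcover : ∀ m, 1 ≤ m → m ≤ 2 * n → m ∈ O ∨ m ∈ C := by
    intro m h1 h2
    obtain ⟨i, hi1, hi2, h⟩ := M.cover m (by simp [Set.mem_Icc]; omega)
    rcases h with h | h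
    · left; simp only [hO, hI, Finset.mem_image, Finset.mem_Icc]
      exact ⟨i, ⟨hi1, hi2⟩, h⟩
    · right; simp only [hC, hI, Finset.mem_image, Finset.mem_Icc]
      exact ⟨i, ⟨hi1, hi2⟩, h⟩
  have h2nO : 2 * n ∉ O := by
    intro h
    simp only [hO, hI, Finset.mem_image, Finset.mem_Icc] at h
    obtain ⟨i, ⟨hi1, hi2⟩, hio⟩ := h
    have h1 := M.opener_lt_closer i hi1 hi2
    have h2 := M.closer_mem i hi1 hi2
    simp only [Set.mem_Icc] at h2
    omega
  have h1C : (1 : ℕ) ∉ C := by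
    intro h
    simp only [hC, hI, Finset.mem_image, Finset.mem_Icc] at h
    obtain ⟨i, ⟨hi1, hi2⟩, hic⟩ := h
    have h1 := M.opener_lt_closer i hi1 hi2
    have h2 := M.opener_mem i hi1 hi2
    simp only [Set.mem_Icc] at h2
    omega
  -- transition counts
  set tOO : Finset ℕ := O.filter (fun m => m + 1 ∈ O) with htOO
  set tOC : Finset ℕ := O.filter (fun m => m + 1 ∈ C) with htOC
  set tCC : Finset ℕ := C.filter (fun m => m + 1 ∈ C) with htCC
  -- Claim A : tOO.card + tOC.card = n
  have hA : tOO.card + tOC.card = n := by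
    have hsplit : O = tOO ∪ tOC := by
      ext m
      simp only [htOO, htOC, Finset.mem_union, Finset.mem_filter]
      constructor
      · intro hm
        have hb := hOsub m hm
        have hm2 : m + 1 ≤ 2 * n := by
          by_contra hcon
          have hme : m = 2 * n := by omega
          exact h2nO (hme ▸ hm)
        rcases hcover (m + 1) (by omega) hm2 with h | h
        · exact Or.inl ⟨hm, h⟩
        · exact Or.inr ⟨hm, h⟩
      · rintro (⟨h, _⟩ | ⟨h, _⟩) <;> exact h
    have hd : Disjoint tOO tOC := by
      rw [Finset.disjoint_left]
      intro m hm hm'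
      simp only [htOO, htOC, Finset.mem_filter] at hm hm'
      exact hdisj (m + 1) hm.2 hm'.2
    rw [← hOcard, hsplit, Finset.card_union_of_disjoint hd]
  -- Claim B : tOC.card + tCC.card = n
  have hB : tOC.card + tCC.card = n := by
    have himg : (tOC ∪ tCC).image (· + 1) = C := by
      ext c
      simp only [htOC, htCC, Finset.mem_image, Finset.mem_union, Finset.mem_filter]
      constructor
      · rintro ⟨m, (⟨_, h⟩ | ⟨_, h⟩), rfl⟩ <;> exact h
      · intro hc
        have hb := hCsub c hc
        have hc1 : c ≠ 1 := by rintro rfl; exact h1C hc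
        refine ⟨c - 1, ?_, by omega⟩
        have hcm : c - 1 + 1 = c := by omega
        rcases hcover (c - 1) (by omega) (by omega) with h | h
        · exact Or.inl ⟨h, by rw [hcm]; exact hc⟩
        · exact Or.inr ⟨h, by rw [hcm]; exact hc⟩
    have hinj : Set.InjOn (· + 1) ↑(tOC ∪ tCC) := by
      intro a _ b _ h
      simpa using h
    have hd : Disjoint tOC tCC := by
      rw [Finset.disjoint_left]
      intro m hm hm'
      simp only [htOC, htCC, Finset.mem_filter] at hm hm'
      exact hdisj m hm.1 hm'.1
    have h2 := Finset.card_image_of_injOn hinj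
    rw [himg, hCcard, Finset.card_union_of_disjoint hd] at h2
    omega
  have hkey : tOO.card = tCC.card := by omega
  -- identify the two ncard sets with finset counts
  have hLeft : {p : ℕ × ℕ | 1 ≤ p.1 ∧ p.1 ≤ n ∧ 1 ≤ p.2 ∧ p.2 ≤ n ∧
      M.opener p.2 = M.opener p.1 + 1} =
      ↑((I ×ˢ I).filter (fun p => M.opener p.2 = M.opener p.1 + 1)) := by
    ext p
    simp [hI, Finset.mem_Icc, Set.mem_setOf_eq, and_assoc]
  have hRight : {p : ℕ × ℕ | 1 ≤ p.1 ∧ p.1 ≤ n ∧ 1 ≤ p.2 ∧ p.2 ≤ n ∧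
      M.closer p.2 = M.closer p.1 + 1} =
      ↑((I ×ˢ I).filter (fun p => M.closer p.2 = M.closer p.1 + 1)) := by
    ext p
    simp [hI, Finset.mem_Icc, Set.mem_setOf_eq, and_assoc]
  rw [hLeft, hRight, Set.ncard_coe_finset, Set.ncard_coe_finset]
  have hLcard : ((I ×ˢ I).filter (fun p => M.opener p.2 = M.opener p.1 + 1)).card
      = tOO.card := by
    apply Finset.card_bij (fun p _ => M.opener p.1)
    · intro p hp
      simp only [Finset.mem_filter, Finset.mem_product] at hp
      simp only [htOO, Finset.mem_filter]
      constructor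
      · exact Finset.mem_image_of_mem _ hp.1.1
      · rw [← hp.2]; exact Finset.mem_image_of_mem _ hp.1.2
    · intro p hp q hq h
      simp only [Finset.mem_filter, Finset.mem_product] at hp hq
      have h1 : p.1 = q.1 := hOinj (Finset.mem_coe.mpr hp.1.1) (Finset.mem_coe.mpr hq.1.1) h
      have h2 : p.2 = q.2 := by
        apply hOinj (Finset.mem_coe.mpr hp.1.2) (Finset.mem_coe.mpr hq.1.2)
        rw [hp.2, hq.2, h]
      exact Prod.ext h1 h2
    · intro m hm
      simp only [htOO, Finset.mem_filter, hO, Finset.mem_image] at hm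
      obtain ⟨⟨i, hi, hio⟩, j, hj, hjo⟩ := hm
      refine ⟨(i, j), ?_, hio⟩
      simp only [Finset.mem_filter, Finset.mem_product]
      exact ⟨⟨hi, hj⟩, by rw [hjo, hio]⟩
  have hRcard : ((I ×ˢ I).filter (fun p => M.closer p.2 = M.closer p.1 + 1)).card
      = tCC.card := by
    apply Finset.card_bij (fun p _ => M.closer p.1)
    · intro p hp
      simp only [Finset.mem_filter, Finset.mem_product] at hp
      simp only [htCC, Finset.mem_filter]
      constructor
      · exact Finset.mem_image_of_mem _ hp.1.1
      · rw [← hp.2]; exact Finset.mem_image_of_mem _ hp.1.2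
    · intro p hp q hq h
      simp only [Finset.mem_filter, Finset.mem_product] at hp hq
      have h1 : p.1 = q.1 := hCinj (Finset.mem_coe.mpr hp.1.1) (Finset.mem_coe.mpr hq.1.1) h
      have h2 : p.2 = q.2 := by
        apply hCinj (Finset.mem_coe.mpr hp.1.2) (Finset.mem_coe.mpr hq.1.2)
        rw [hp.2, hq.2, h]
      exact Prod.ext h1 h2
    · intro m hm
      simp only [htCC, Finset.mem_filter, hC, Finset.mem_image] at hm
      obtain ⟨⟨i, hi, hio⟩, j, hj, hjo⟩ := hm
      refine ⟨(i, j), ?_, hio⟩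
      simp only [Finset.mem_filter, Finset.mem_product]
      exact ⟨⟨hi, hj⟩, by rw [hjo, hio]⟩
  rw [hLcard, hRcard, hkey]
end
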